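/- arXiv:1812.09038 — 6 statements merged into one kernel-verified Lean document; each statement's English description precedes it below -/
import Mathlib

section
/- A matching M in a graph G is uniquely restricted if and only if G contains no M-alternating cycle. -/
open SimpleGraph

/-- The subgraph of `G` consisting of those pairs in `s` that are actually edges of `G`. -/
def pairsSubgraph {V : Type*} (G : SimpleGraph V) (s : Set (V × V)) : G.Subgraph where
  verts := {v | ∃ a b, (G.Adj a b ∧ ((a, b) ∈ s ∨ (b, a) ∈ s)) ∧ (v = a ∨ v = b)}
  Adj a b := G.Adj a b ∧ ((a, b) ∈ s ∨ (b, a) ∈ s)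
  adj_sub h := h.1
  edge_vert h := ⟨_, _, h, Or.inl rfl⟩
  symm := ⟨fun _ _ h => ⟨h.1.symm, h.2.symm⟩⟩

/-- `M` is an induced matching in `G`: it is a matching, and `G(M)`, the subgraph of `G`
induced by the set `V(M)` of covered vertices (which is `M.verts` for a matching subgraph),
is `1`-regular, i.e. every vertex of `G(M)` has exactly one neighbour in `G(M)`. -/
def IsInducedMatching {V : Type*} (G : SimpleGraph V) (M : G.Subgraph) : Prop :=
  M.IsMatching ∧ ∀ v : M.verts, ∃! w : M.verts, (G.induce M.verts).Adj v w

/-- `M` is an acyclic matching in `G`: it is a matching and `G(M)` is a forest. -/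
def IsAcyclicMatching {V : Type*} (G : SimpleGraph V) (M : G.Subgraph) : Prop :=
  M.IsMatching ∧ (G.induce M.verts).IsAcyclic

/-- `M` is a uniquely restricted matching in `G`: it is a matching and it is the unique
perfect matching of `G(M)`, i.e. the unique matching of `G` covering exactly `M.verts`. -/
def IsURMatching {V : Type*} (G : SimpleGraph V) (M : G.Subgraph) : Prop :=
  M.IsMatching ∧ ∀ M' : G.Subgraph, M'.IsMatching → M'.verts = M.verts → M' = M

/-- The (ordinary) matching number `ν(G)`: the maximum cardinality of a matching in `G`. -/
noncomputable def nuMatch {V : Type*} (G : SimpleGraph V) : ℕ :=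
  sSup {k : ℕ | ∃ M : G.Subgraph, M.IsMatching ∧ M.edgeSet.ncard = k}

/-- The uniquely restricted matching number `ν_ur(G)`. -/
noncomputable def nuUR {V : Type*} (G : SimpleGraph V) : ℕ :=
  sSup {k : ℕ | ∃ M : G.Subgraph, IsURMatching G M ∧ M.edgeSet.ncard = k}

/-- The acyclic matching number `ν_ac(G)`. -/
noncomputable def nuAc {V : Type*} (G : SimpleGraph V) : ℕ :=
  sSup {k : ℕ | ∃ M : G.Subgraph, IsAcyclicMatching G M ∧ M.edgeSet.ncard = k}

/-- The induced (strong) matching number `ν_s(G)`. -/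
noncomputable def nuS {V : Type*} (G : SimpleGraph V) : ℕ :=
  sSup {k : ℕ | ∃ M : G.Subgraph, IsInducedMatching G M ∧ M.edgeSet.ncard = k}

/-- `cyc` is an `M`-alternating cycle in `G`: a cycle of `G` whose edges alternate between
edges of `M` and edges of `E(G) \ M`. -/
def IsAltCycle {V : Type*} (G : SimpleGraph V) (M : G.Subgraph) {v : V}
    (cyc : G.Walk v v) : Prop :=
  cyc.IsCycle ∧ cyc.toSubgraph.spanningCoe.IsAlternating M.spanningCoe

private lemma pathEndUnique {V : Type*} {G : SimpleGraph V} {u b : V} (p : G.Walk u b)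
    (hp : p.IsPath) : ∀ y z, p.toSubgraph.Adj b y → p.toSubgraph.Adj b z → y = z := by
  induction p with
  | nil => simp [Walk.toSubgraph]
  | @cons u w b h q ih =>
    rw [Walk.cons_isPath_iff] at hp
    intro y z hy hz
    simp only [Walk.toSubgraph, Subgraph.sup_adj, subgraphOfAdj_adj, Sym2.eq_iff] at hy hz
    have hub : u ≠ b := fun he => hp.2 (he ▸ q.end_mem_support)
    by_cases hwb : w = b
    · subst hwb
      have hqnil : q = Walk.nil := (Walk.isPath_iff_eq_nil (p := q)).mp hp.1
      subst hqnil
      simp only [Walk.toSubgraph, singletonSubgraph_adj, Set.mem_singleton_iff] at hy hz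
      rcases hy with hy | hy <;> rcases hz with hz | hz <;>
        simp_all [singletonSubgraph_adj]
    · have hy' : q.toSubgraph.Adj b y := by
        rcases hy with (⟨h1, h2⟩ | ⟨h1, h2⟩) | hy
        · exact absurd h1 hub
        · exact absurd h2 hwb
        · exact hy
      have hz' : q.toSubgraph.Adj b z := by
        rcases hz with (⟨h1, h2⟩ | ⟨h1, h2⟩) | hz
        · exact absurd h1 hub
        · exact absurd h2 hwb
        · exact hz
      exact ih hp.1 y z hy' hz'

private lemma cycle_nbrs_start {V : Type*} {G : SimpleGraph V} {x : V} (c : G.Walk x x)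
    (hc : c.IsCycle) :
    ∃ a b, a ≠ b ∧ c.toSubgraph.Adj x a ∧ c.toSubgraph.Adj x b ∧
      ∀ y, c.toSubgraph.Adj x y → y = a ∨ y = b := by
  cases c with
  | nil => exact absurd rfl hc.ne_nil
  | @cons _ w _ h q =>
    obtain ⟨hq, he⟩ := (Walk.cons_isCycle_iff q h).mp hc
    have hlen : 2 ≤ q.length := by
      have := hc.three_le_length
      simp only [Walk.length_cons] at this
      omega
    obtain ⟨b, hb⟩ : ∃ b, q.getVert (q.length - 1) = b := ⟨_, rfl⟩
    have hqadj : q.toSubgraph.Adj b x := by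
      have := q.toSubgraph_adj_getVert (i := q.length - 1) (by omega)
      rwa [show q.length - 1 + 1 = q.length by omega, q.getVert_length, hb] at this
    refine ⟨w, b, ?_, ?_, ?_, ?_⟩
    · intro hwb
      have hmem : s(x, b) ∈ q.edges :=
        (Walk.mem_edges_toSubgraph q).mp (Subgraph.mem_edgeSet.mpr hqadj.symm)
      rw [← hwb] at hmem
      exact he hmem
    · exact Or.inl (by simp)
    · exact Or.inr hqadj.symm
    · intro y hy
      simp only [Walk.toSubgraph, Subgraph.sup_adj, subgraphOfAdj_adj, Sym2.eq_iff] at hy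
      rcases hy with (⟨_, h2⟩ | ⟨_, h2⟩) | hy
      · exact Or.inl h2.symm
      · exact absurd h2 h.ne.symm
      · exact Or.inr (pathEndUnique q hq y b hy hqadj.symm)

private lemma cycle_nbrs {V : Type*} {G : SimpleGraph V} {v x : V} (c : G.Walk v v)
    (hc : c.IsCycle) (hx : x ∈ c.support) :
    ∃ a b, a ≠ b ∧ c.toSubgraph.Adj x a ∧ c.toSubgraph.Adj x b ∧
      ∀ y, c.toSubgraph.Adj x y → y = a ∨ y = b := by
  classical
  have hrot := cycle_nbrs_start (c.rotate x hx) (hc.rotate hx)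
  rwa [c.toSubgraph_rotate hx] at hrot

private lemma exists_cycle_aux {V : Type*} [Fintype V] {H : SimpleGraph V}
    (hother : ∀ ⦃v w⦄, H.Adj v w → ∃ w', w' ≠ w ∧ H.Adj v w')
    {a b : V} (hab : H.Adj a b) : ∃ (x : V) (c : H.Walk x x), c.IsCycle := by
  classical
  set S : Set ℕ := {n | ∃ (x y : V) (p : H.Walk x y), p.IsPath ∧ p.length = n} with hS
  have hSne : 1 ∈ S := ⟨a, b, Walk.cons hab Walk.nil, by simp [hab.ne], rfl⟩
  have hbdd : BddAbove S := by
    refine ⟨Fintype.card V, fun n hn => ?_⟩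
    obtain ⟨x, y, p, hp, hl⟩ := hn
    have := hp.length_lt
    omega
  obtain ⟨x, y, p, hp, hl⟩ := Nat.sSup_mem ⟨1, hSne⟩ hbdd
  have hlen : 1 ≤ p.length := hl ▸ le_csSup hbdd hSne
  -- second vertex of p
  have hadj1 : p.toSubgraph.Adj x (p.getVert 1) := by
    have := p.toSubgraph_adj_getVert (i := 0) (by omega)
    simpa using this
  obtain ⟨w', hw'ne, hw'adj⟩ := hother (p.toSubgraph.adj_sub hadj1)
  by_cases hmem : w' ∈ p.support
  · -- found a cycle
    have hq : (p.takeUntil w' hmem).IsPath := hp.takeUntil hmem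
    refine ⟨w', Walk.cons hw'adj.symm (p.takeUntil w' hmem), ?_⟩
    rw [Walk.cons_isCycle_iff]
    refine ⟨hq, fun hmem2 => ?_⟩
    have hmem3 : s(w', x) ∈ p.edges := p.edges_takeUntil_subset hmem hmem2
    have hadj2 : p.toSubgraph.Adj x w' :=
      (Subgraph.mem_edgeSet.mp ((Walk.mem_edges_toSubgraph p).mpr hmem3)).symm
    have : w' = p.getVert 1 := by
      have h1 : p.reverse.toSubgraph.Adj x w' := by rwa [p.toSubgraph_reverse]
      have h2 : p.reverse.toSubgraph.Adj x (p.getVert 1) := by rwa [p.toSubgraph_reverse]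
      exact pathEndUnique p.reverse hp.reverse w' (p.getVert 1) h1 h2
    exact hw'ne this
  · -- extend the path, contradicting maximality
    exfalso
    have : (Walk.cons hw'adj.symm p).length ∈ S :=
      ⟨w', y, Walk.cons hw'adj.symm p, (Walk.cons_isPath_iff _ _).mpr ⟨hp, hmem⟩, rfl⟩
    have hle := le_csSup hbdd this
    simp only [Walk.length_cons] at hle
    omega

/-- A matching `M` in a graph `G` is uniquely restricted if and only if `G` contains no
`M`-alternating cycle. -/
theorem isURMatching_iff_no_alternating_cycle {V : Type*} [Fintype V] (G : SimpleGraph V)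
    (M : G.Subgraph) (hM : M.IsMatching) :
    IsURMatching G M ↔ ¬ ∃ (v : V) (cyc : G.Walk v v), IsAltCycle G M cyc := by
  constructor
  · rintro ⟨hMm, hU⟩ ⟨v, cyc, hcyc, halt⟩
    -- key structural fact at each vertex of the cycle
    have key : ∀ x, x ∈ cyc.support → x ∈ M.verts ∧ ∃ o, cyc.toSubgraph.Adj x o ∧ ¬ M.Adj x o ∧
        ∀ y, ((M.Adj x y ∧ ¬cyc.toSubgraph.Adj x y) ∨ (cyc.toSubgraph.Adj x y ∧ ¬M.Adj x y)) →
          y = o := by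
      intro x hx
      obtain ⟨A, B, hAB, hA, hB, huniq⟩ := cycle_nbrs cyc hcyc hx
      have hAlt : M.spanningCoe.Adj x A ↔ ¬ M.spanningCoe.Adj x B :=
        halt hAB (by simp [hA]) (by simp [hB])
      simp only [Subgraph.spanningCoe_adj] at hAlt
      by_cases hMA : M.Adj x A
      · have hMB : ¬ M.Adj x B := hAlt.mp hMA
        refine ⟨M.edge_vert hMA, B, hB, hMB, ?_⟩
        rintro y (⟨h1, h2⟩ | ⟨h1, h2⟩)
        · obtain ⟨m, hm, hmu⟩ := hMm (M.edge_vert hMA)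
          have hyA : y = A := (hmu y h1).trans (hmu A hMA).symm
          exact absurd (hyA ▸ hA) h2
        · rcases huniq y h1 with rfl | rfl
          · exact absurd hMA h2
          · rfl
      · have hMB : M.Adj x B := by
          by_contra hc
          exact hMA (hAlt.mpr hc)
        refine ⟨M.edge_vert hMB, A, hA, hMA, ?_⟩
        rintro y (⟨h1, h2⟩ | ⟨h1, h2⟩)
        · obtain ⟨m, hm, hmu⟩ := hMm (M.edge_vert hMB)
          have hyB : y = B := (hmu y h1).trans (hmu B hMB).symm
          exact absurd (hyB ▸ hB) h2
        · rcases huniq y h1 with rfl | rfl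
          · rfl
          · exact absurd hMB h2
    -- the symmetric-difference matching
    have hsupp : ∀ {a b : V}, cyc.toSubgraph.Adj a b → a ∈ cyc.support := fun h =>
      (Walk.mem_verts_toSubgraph cyc).mp (cyc.toSubgraph.edge_vert h)
    let M'' : G.Subgraph :=
      { verts := M.verts
        Adj := fun a b => (M.Adj a b ∧ ¬cyc.toSubgraph.Adj a b) ∨
          (cyc.toSubgraph.Adj a b ∧ ¬M.Adj a b)
        adj_sub := by
          rintro a b (⟨h, _⟩ | ⟨h, _⟩)
          exacts [M.adj_sub h, cyc.toSubgraph.adj_sub h]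
        edge_vert := by
          rintro a b (⟨h, _⟩ | ⟨h, _⟩)
          · exact M.edge_vert h
          · exact (key a (hsupp h)).1
        symm := by
          refine ⟨?_⟩
          rintro a b (⟨h1, h2⟩ | ⟨h1, h2⟩)
          · exact Or.inl ⟨h1.symm, fun hc => h2 hc.symm⟩
          · exact Or.inr ⟨h1.symm, fun hc => h2 hc.symm⟩ }
    have hM''match : M''.IsMatching := by
      intro x hx
      by_cases hxs : x ∈ cyc.support
      · obtain ⟨_, o, ho1, ho2, ho3⟩ := key x hxs
        exact ⟨o, Or.inr ⟨ho1, ho2⟩, ho3⟩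
      · obtain ⟨m, hm, hmu⟩ := hMm hx
        refine ⟨m, Or.inl ⟨hm, fun hc => hxs (hsupp hc)⟩, ?_⟩
        rintro y (⟨h1, _⟩ | ⟨h1, _⟩)
        · exact hmu y h1
        · exact absurd (hsupp h1) hxs
    have hEq : M'' = M := hU M'' hM''match rfl
    obtain ⟨_, o, ho1, ho2, _⟩ := key v cyc.start_mem_support
    have hadj : M''.Adj v o := Or.inr ⟨ho1, ho2⟩
    rw [hEq] at hadj
    exact ho2 hadj
  · intro hno
    refine ⟨hM, fun M' hM' hverts => ?_⟩
    by_contra hne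
    have hdiff : ∃ a b, ¬(M'.Adj a b ↔ M.Adj a b) := by
      by_contra hall
      push_neg at hall
      exact hne (Subgraph.ext hverts (by ext a b; exact hall a b))
    obtain ⟨a, b, hab⟩ := hdiff
    let H : SimpleGraph V :=
      { Adj := fun u w => (M.Adj u w ∧ ¬M'.Adj u w) ∨ (M'.Adj u w ∧ ¬M.Adj u w)
        symm := by
          refine ⟨?_⟩
          rintro u w (⟨h1, h2⟩ | ⟨h1, h2⟩)
          · exact Or.inl ⟨h1.symm, fun hc => h2 hc.symm⟩
          · exact Or.inr ⟨h1.symm, fun hc => h2 hc.symm⟩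
        loopless := by
          refine ⟨?_⟩
          rintro u (⟨h1, _⟩ | ⟨h1, _⟩)
          · exact G.loopless.irrefl u (M.adj_sub h1)
          · exact G.loopless.irrefl u (M'.adj_sub h1) }
    have hstruct : ∀ ⦃u w⦄, H.Adj u w → ∃ m m', m ≠ m' ∧ M.Adj u m ∧ M'.Adj u m' ∧
        (∀ y, M.Adj u y → y = m) ∧ (∀ y, M'.Adj u y → y = m') ∧
        ∀ y, H.Adj u y → y = m ∨ y = m' := by
      intro u w h
      have hu : u ∈ M.verts := by
        rcases h with ⟨h1, _⟩ | ⟨h1, _⟩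
        · exact M.edge_vert h1
        · exact hverts ▸ M'.edge_vert h1
      obtain ⟨m, hm, hmu⟩ := hM hu
      obtain ⟨m', hm', hmu'⟩ := hM' (hverts ▸ hu)
      have hmm' : m ≠ m' := by
        rintro rfl
        rcases h with ⟨h1, h2⟩ | ⟨h1, h2⟩
        · exact h2 (by rw [hmu w h1]; exact hm')
        · exact h2 (by rw [hmu' w h1]; exact hm)
      refine ⟨m, m', hmm', hm, hm', fun y hy => hmu y hy, fun y hy => hmu' y hy, ?_⟩
      rintro y (⟨h1, _⟩ | ⟨h1, _⟩)
      exacts [Or.inl (hmu y h1), Or.inr (hmu' y h1)]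
    have hother : ∀ ⦃u w⦄, H.Adj u w → ∃ w', w' ≠ w ∧ H.Adj u w' := by
      intro u w h
      obtain ⟨m, m', hmm', hm, hm', hmu, hmu', hmem⟩ := hstruct h
      rcases hmem w h with rfl | rfl
      · exact ⟨m', hmm'.symm, Or.inr ⟨hm', fun hc => hmm' (hmu m' hc).symm⟩⟩
      · exact ⟨m, hmm', Or.inl ⟨hm, fun hc => hmm' (hmu' m hc)⟩⟩
    have hHab : H.Adj a b := by
      by_cases h1 : M'.Adj a b
      · exact Or.inr ⟨h1, fun h2 => hab ⟨fun _ => h2, fun _ => h1⟩⟩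
      · have hMab : M.Adj a b := by
          by_contra hc
          exact hab (iff_of_false h1 hc)
        exact Or.inl ⟨hMab, h1⟩
    obtain ⟨x, c, hcyc⟩ := exists_cycle_aux hother hHab
    have hHG : ∀ e ∈ c.edges, e ∈ G.edgeSet := by
      intro e he
      have hle : H ≤ G := by
        rintro u w (⟨h1, _⟩ | ⟨h1, _⟩)
        exacts [M.adj_sub h1, M'.adj_sub h1]
      exact edgeSet_mono hle (c.edges_subset_edgeSet he)
    refine hno ⟨x, c.transfer G hHG, hcyc.transfer hHG, ?_⟩
    intro u w w' hww' h1 h2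
    have hH1 : H.Adj u w := c.edges_subset_edgeSet (by
      have := (Walk.mem_edges_toSubgraph (c.transfer G hHG)).mp (Subgraph.mem_edgeSet.mpr
        (by simpa using h1))
      rwa [Walk.edges_transfer] at this)
    have hH2 : H.Adj u w' := c.edges_subset_edgeSet (by
      have := (Walk.mem_edges_toSubgraph (c.transfer G hHG)).mp (Subgraph.mem_edgeSet.mpr
        (by simpa using h2))
      rwa [Walk.edges_transfer] at this)
    obtain ⟨m, m', hmm', hm, hm', hmu, hmu', hmem⟩ := hstruct hH1
    have hnotm' : ¬ M.Adj u m' := fun hc => hmm' (hmu m' hc).symm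
    simp only [Subgraph.spanningCoe_adj]
    rcases hmem w hH1 with rfl | rfl <;> rcases hmem w' hH2 with rfl | rfl
    · exact absurd rfl hww'
    · exact iff_of_true hm (by simpa using hnotm')
    · exact iff_of_false hnotm' (not_not_intro hm)
    · exact absurd rfl hww'
end

section
/- If G is a bipartite graph and M is a nonempty uniquely restricted matching in G, then the graph G(M) has a vertex of degree 1 in G(M). -/
open SimpleGraph

/-- If `G` is a bipartite graph and `M` is a nonempty uniquely restricted matching in `G`, then
the graph `G(M)` has a vertex of degree `1` in `G(M)`. -/
theorem bipartite_ur_matching_has_pendant_vertex {V : Type*} [Fintype V] (G : SimpleGraph V)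
    (hbip : G.Colorable 2) (M : G.Subgraph) (hM : IsURMatching G M)
    (hne : M.edgeSet.Nonempty) :
    ∃ v : M.verts, ∃! w : M.verts, (G.induce M.verts).Adj v w := by
  classical
  obtain ⟨hmatch, hur⟩ := hM
  obtain ⟨col⟩ := hbip
  by_contra hcon
  push_neg at hcon
  -- the partner function `p`
  have hpex : ∀ v : V, ∃ w : V, v ∈ M.verts → M.Adj v w ∧ ∀ y, M.Adj v y → y = w := by
    intro v
    by_cases hv : v ∈ M.verts
    · obtain ⟨w, hw, hu⟩ := hmatch hv
      exact ⟨w, fun _ => ⟨hw, hu⟩⟩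
    · exact ⟨v, fun h => absurd h hv⟩
  choose p hp using hpex
  have hpadj : ∀ v, v ∈ M.verts → M.Adj v (p v) := fun v hv => (hp v hv).1
  have hpuniq : ∀ v, v ∈ M.verts → ∀ y, M.Adj v y → y = p v := fun v hv => (hp v hv).2
  have hpS : ∀ v, v ∈ M.verts → p v ∈ M.verts := fun v hv => M.edge_vert (hpadj v hv).symm
  have hpp : ∀ v, v ∈ M.verts → p (p v) = v := fun v hv =>
    (hpuniq (p v) (hpS v hv) v (hpadj v hv).symm).symm
  -- the "other neighbour" function `q`
  have hqex : ∀ v : V, ∃ w : V, v ∈ M.verts → w ∈ M.verts ∧ G.Adj v w ∧ w ≠ p v := by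
    intro v
    by_cases hv : v ∈ M.verts
    · have hpv : p v ∈ M.verts := hpS v hv
      have hP0 : (G.induce M.verts).Adj ⟨v, hv⟩ ⟨p v, hpv⟩ := M.adj_sub (hpadj v hv)
      have hex : ∃ w : M.verts, (G.induce M.verts).Adj ⟨v, hv⟩ w ∧ w ≠ ⟨p v, hpv⟩ := by
        by_contra hc
        push_neg at hc
        exact hcon ⟨v, hv⟩ ⟨⟨p v, hpv⟩, hP0, fun y hy => hc y hy⟩
      obtain ⟨⟨w, hwS⟩, hadj, hne'⟩ := hex
      refine ⟨w, fun _ => ⟨hwS, hadj, ?_⟩⟩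
      intro hwe
      exact hne' (Subtype.ext hwe)
    · exact ⟨v, fun h => absurd h hv⟩
  choose q hq using hqex
  set g : V → V := fun x => q (p x) with hg
  have hgS : ∀ v, v ∈ M.verts → g v ∈ M.verts := fun v hv => (hq (p v) (hpS v hv)).1
  -- colours
  have hcol2 : ∀ a b c : Fin 2, a ≠ b → c ≠ b → a = c := by decide
  have hcolp : ∀ v, v ∈ M.verts → col (p v) ≠ col v := fun v hv =>
    (col.valid (M.adj_sub (hpadj v hv))).symm
  have hcolq : ∀ v, v ∈ M.verts → col (q v) ≠ col v := fun v hv =>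
    (col.valid (hq v hv).2.1).symm
  have hcolg : ∀ v, v ∈ M.verts → col (g v) = col v := fun v hv =>
    hcol2 _ _ _ (hcolq (p v) (hpS v hv)) (hcolp v hv).symm
  -- a starting vertex
  have hv0ex : ∃ v, v ∈ M.verts := by
    obtain ⟨e, he⟩ := hne
    induction e using Sym2.ind with
    | _ a b => exact ⟨a, M.edge_vert (Subgraph.mem_edgeSet.mp he)⟩
  obtain ⟨v0, hv0⟩ := hv0ex
  have hiter : ∀ k, g^[k] v0 ∈ M.verts := by
    intro k
    induction k with
    | zero => exact hv0
    | succ n ih => rw [Function.iterate_succ_apply']; exact hgS _ ih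
  -- pigeonhole: a periodic point of g
  obtain ⟨a, b, hab, hfe⟩ := Finite.exists_ne_map_eq_of_infinite (fun k : ℕ => g^[k] v0)
  obtain ⟨i, j, hlt, hfe⟩ : ∃ i j, i < j ∧ g^[i] v0 = g^[j] v0 := by
    rcases lt_or_gt_of_ne hab with h' | h'
    · exact ⟨a, b, h', hfe⟩
    · exact ⟨b, a, h', hfe.symm⟩
  set v1 := g^[i] v0 with hv1def
  have hv1S : v1 ∈ M.verts := hiter i
  have hper0 : 0 < j - i ∧ g^[j - i] v1 = v1 := by
    refine ⟨by omega, ?_⟩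
    rw [hv1def, ← Function.iterate_add_apply]
    have hji : j - i + i = j := by omega
    rw [hji, ← hfe]
  have hPex : ∃ m, 0 < m ∧ g^[m] v1 = v1 := ⟨j - i, hper0⟩
  set m1 := Nat.find hPex with hm1def
  obtain ⟨hm1pos, hm1per⟩ : 0 < m1 ∧ g^[m1] v1 = v1 := Nat.find_spec hPex
  have hm1min : ∀ r, r < m1 → ¬(0 < r ∧ g^[r] v1 = v1) := fun r hr => Nat.find_min hPex hr
  -- iterates of v1 are in M.verts
  have hkS : ∀ k, g^[k] v1 ∈ M.verts := by
    intro k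
    rw [hv1def, ← Function.iterate_add_apply]
    exact hiter _
  -- injectivity of iterates below m1
  have ge : ∀ s t, s < m1 → t < m1 → g^[s] v1 = g^[t] v1 → s = t := by
    have key : ∀ s t, s < t → t < m1 → g^[s] v1 ≠ g^[t] v1 := by
      intro s t hst htm heq
      have h1 : g^[m1 - t] (g^[t] v1) = v1 := by
        rw [← Function.iterate_add_apply]
        have hmt : m1 - t + t = m1 := by omega
        rw [hmt, hm1per]
      have h2 : g^[m1 - t + s] v1 = v1 := by
        rw [Function.iterate_add_apply, heq]
        exact h1
      exact hm1min (m1 - t + s) (by omega) ⟨by omega, h2⟩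
    intro s t hs ht heq
    rcases lt_trichotomy s t with h' | h' | h'
    · exact absurd heq (key s t h' ht)
    · exact h'
    · exact absurd heq.symm (key t s h' hs)
  -- colours of iterates
  have hcolk : ∀ k, col (g^[k] v1) = col v1 := by
    intro k
    induction k with
    | zero => rfl
    | succ n ih => rw [Function.iterate_succ_apply', hcolg _ (hkS n), ih]
  have hcolpk : ∀ k, col (p (g^[k] v1)) ≠ col v1 := fun k h =>
    hcolp _ (hkS k) (h.trans (hcolk k).symm)
  -- injectivity of successor-iterates
  have ge' : ∀ s t, s < m1 → t < m1 → g^[s + 1] v1 = g^[t + 1] v1 → s = t := by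
    have key : ∀ s, s + 1 = m1 → ∀ t, t < m1 → g^[s + 1] v1 = g^[t + 1] v1 → s = t := by
      intro s hs t ht heq
      rcases lt_or_eq_of_le (Nat.succ_le_of_lt ht) with h' | h'
      · exfalso
        have h0 : g^[t + 1] v1 = g^[0] v1 := by
          rw [← heq, hs, hm1per]
          rfl
        have h1 : t + 1 < m1 := h'
        have := ge (t + 1) 0 h1 hm1pos h0
        omega
      · have h1 : t + 1 = m1 := h'
        omega
    intro s t hs ht heq
    by_cases h1 : s + 1 < m1
    · by_cases h2 : t + 1 < m1
      · have := ge (s + 1) (t + 1) h1 h2 heq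
        omega
      · have h2' : t + 1 = m1 := by omega
        exact (key t h2' s hs heq.symm).symm
    · have h1' : s + 1 = m1 := by omega
      exact key s h1' t ht heq
  -- basic unfolding of g-iterates
  have hgsucc : ∀ k, g^[k + 1] v1 = q (p (g^[k] v1)) := by
    intro k
    rw [Function.iterate_succ_apply']
  -- the vertex set of the alternating cycle
  set cyc : Set V := {x | ∃ k, k < m1 ∧ (x = g^[k] v1 ∨ x = p (g^[k] v1))} with hcycdef
  have hcycS : ∀ x, x ∈ cyc → x ∈ M.verts := by
    rintro x ⟨k, hk, h | h⟩
    · rw [h]; exact hkS k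
    · rw [h]; exact hpS _ (hkS k)
  have hpcyc : ∀ x, x ∈ cyc → p x ∈ cyc := by
    rintro x ⟨k, hk, h | h⟩
    · exact ⟨k, hk, Or.inr (by rw [h])⟩
    · exact ⟨k, hk, Or.inl (by rw [h, hpp _ (hkS k)])⟩
  have hgk1cyc : ∀ k, k < m1 → g^[k + 1] v1 ∈ cyc := by
    intro k hk
    rcases lt_or_eq_of_le (Nat.succ_le_of_lt hk) with h' | h'
    · exact ⟨k + 1, h', Or.inl rfl⟩
    · refine ⟨0, hm1pos, Or.inl ?_⟩
      have h'' : k + 1 = m1 := h'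
      rw [h'', hm1per]
      rfl
  have hpkcyc : ∀ k, k < m1 → p (g^[k] v1) ∈ cyc := fun k hk => ⟨k, hk, Or.inr rfl⟩
  -- the swapped subgraph M'
  let Adj' : V → V → Prop := fun x y =>
    (x ∉ cyc ∧ y ∉ cyc ∧ M.Adj x y) ∨
    (∃ k, k < m1 ∧ ((x = p (g^[k] v1) ∧ y = g^[k + 1] v1) ∨
      (y = p (g^[k] v1) ∧ x = g^[k + 1] v1)))
  have hGadj' : ∀ x y, Adj' x y → G.Adj x y := by
    rintro x y (⟨-, -, h⟩ | ⟨k, hk, ⟨hx, hy⟩ | ⟨hy, hx⟩⟩)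
    · exact M.adj_sub h
    · rw [hx, hy, hgsucc]
      exact (hq _ (hpS _ (hkS k))).2.1
    · rw [hx, hy, hgsucc]
      exact ((hq _ (hpS _ (hkS k))).2.1).symm
  let M' : G.Subgraph :=
    { verts := M.verts
      Adj := Adj'
      adj_sub := fun {x y} h => hGadj' x y h
      edge_vert := by
        rintro x y (⟨-, -, h⟩ | ⟨k, hk, ⟨hx, -⟩ | ⟨-, hx⟩⟩)
        · exact M.edge_vert h
        · rw [hx]; exact hpS _ (hkS k)
        · rw [hx]; exact hkS (k + 1)
      symm := by
        constructor
        rintro x y (⟨h1, h2, h3⟩ | ⟨k, hk, h | h⟩)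
        · exact Or.inl ⟨h2, h1, h3.symm⟩
        · exact Or.inr ⟨k, hk, Or.inr h⟩
        · exact Or.inr ⟨k, hk, Or.inl h⟩ }
  have hM'adj : ∀ x y, M'.Adj x y ↔ Adj' x y := fun x y => Iff.rfl
  -- M' is a matching
  have hM'match : M'.IsMatching := by
    intro v hv
    have hvS : v ∈ M.verts := hv
    by_cases hvc : v ∈ cyc
    · obtain ⟨k, hk, hcase⟩ := hvc
      rcases hcase with hveq | hveq
      · -- v = g^[k] v1 : even position
        have hcolv : col v = col v1 := by rw [hveq]; exact hcolk k
        -- designated index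
        obtain ⟨k', hk', hkey⟩ : ∃ k', k' < m1 ∧ v = g^[k' + 1] v1 := by
          rcases Nat.eq_zero_or_pos k with h0 | h0
          · refine ⟨m1 - 1, by omega, ?_⟩
            have : m1 - 1 + 1 = m1 := by omega
            rw [this, hm1per, hveq, h0]
            rfl
          · exact ⟨k - 1, by omega, by rw [hveq]; congr 1; omega⟩
        refine ⟨p (g^[k'] v1), Or.inr ⟨k', hk', Or.inr ⟨rfl, hkey⟩⟩, ?_⟩
        rintro w (⟨hw1, -, -⟩ | ⟨j, hj, ⟨hv', hw⟩ | ⟨hw, hv'⟩⟩)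
        · exact absurd ⟨k, hk, Or.inl hveq⟩ hw1
        · exact absurd (by rw [hv'] at hcolv; exact hcolv) (hcolpk j)
        · -- v = g^[j+1] v1, w = p (g^[j] v1) : show j = k'
          have hj' : j = k' := ge' j k' hj hk' (by rw [← hv', hkey])
          rw [hw, hj']
      · -- v = p (g^[k] v1) : odd position
        refine ⟨g^[k + 1] v1, Or.inr ⟨k, hk, Or.inl ⟨hveq, rfl⟩⟩, ?_⟩
        rintro w (⟨hw1, -, -⟩ | ⟨j, hj, ⟨hv', hw⟩ | ⟨hw, hv'⟩⟩)
        · exact absurd ⟨k, hk, Or.inr hveq⟩ hw1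
        · -- v = p (g^[j] v1) : p-injectivity gives j = k
          have hpj : p (g^[j] v1) = p (g^[k] v1) := by rw [← hv', hveq]
          have hgj : g^[j] v1 = g^[k] v1 := by
            have := congrArg p hpj
            rwa [hpp _ (hkS j), hpp _ (hkS k)] at this
          rw [hw, ge j k hj hk hgj]
        · -- v = g^[j+1] v1 : colour contradiction
          exfalso
          have h1 : col v = col v1 := by rw [hv']; exact hcolk (j + 1)
          have h2 : col v ≠ col v1 := by rw [hveq]; exact hcolpk k
          exact h2 h1
    · -- v off the cycle: the old partner
      have hpvc : p v ∉ cyc := fun h => hvc (by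
        have := hpcyc _ h
        rwa [hpp v hvS] at this)
      refine ⟨p v, Or.inl ⟨hvc, hpvc, hpadj v hvS⟩, ?_⟩
      rintro w (⟨-, -, h⟩ | ⟨j, hj, ⟨hv', -⟩ | ⟨-, hv'⟩⟩)
      · exact hpuniq v hvS w h
      · exact absurd ⟨j, hj, Or.inr hv'⟩ hvc
      · exact absurd (by rw [hv']; exact hgk1cyc j hj) hvc
  -- conclude : M' = M, contradiction
  have hM'eq : M' = M := hur M' hM'match rfl
  have hadj1 : M'.Adj (p (g^[0] v1)) (g^[0 + 1] v1) :=
    Or.inr ⟨0, hm1pos, Or.inl ⟨rfl, rfl⟩⟩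
  rw [hM'eq] at hadj1
  have h1 : g^[0 + 1] v1 = p (p (g^[0] v1)) := hpuniq _ (hpS _ (hkS 0)) _ hadj1
  have h2 : q (p (g^[0] v1)) ≠ p (p (g^[0] v1)) := (hq _ (hpS _ (hkS 0))).2.2
  rw [hgsucc 0] at h1
  exact h2 h1
end

section
/- The matching M that arises from {u_i t_i : i ∈ [n]} by adding, for every j ∈ [m], an arbitrary edge of the clique on C_j, is an acyclic matching in G(Γ) of size n+m; in particular ν_ac(G(Γ)) ≥ n+m. -/
open SimpleGraph

/-- Vertices of the graph `G(Γ)` for the SATISFIABILITY instance `Γ` with `n` variables and `m`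
clauses: `Sum.inl (i, 0) = t_i`, `Sum.inl (i, 1) = f_i`, `Sum.inl (i, 2) = u_i` are the vertices
of the triangle `X_i`; `Sum.inr (j, none) = v_j`, and `Sum.inr (j, some l)` is the vertex of the
clique `C_j` identified with the literal `l` (it is isolated unless `l` belongs to `c_j`, so that
the clique `C_j` effectively has `|c_j| + 1` vertices). A literal `(i, true)` is `x_i` and a
literal `(i, false)` is `¬x_i`. -/
abbrev SatV (n m : ℕ) : Type := (Fin n × Fin 3) ⊕ (Fin m × Option (Fin n × Bool))

/-- The base relation for `G(Γ)`: all edges inside each triangle `X_i`, all edges inside each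
clique `C_j`, an edge from `f_i` to every vertex identified with the literal `x_i`, and an edge
from `t_i` to every vertex identified with the literal `¬x_i`. -/
def satRel {n m : ℕ} (c : Fin m → Finset (Fin n × Bool)) : SatV n m → SatV n m → Prop
  | Sum.inl (i, k), Sum.inl (i', k') => i = i' ∧ k ≠ k'
  | Sum.inr (j, o), Sum.inr (j', o') =>
      j = j' ∧ o ≠ o' ∧ (∀ l, o = some l → l ∈ c j) ∧ (∀ l, o' = some l → l ∈ c j)
  | Sum.inl (i, k), Sum.inr (j, o) =>
      (k = 1 ∧ o = some (i, true) ∧ (i, true) ∈ c j) ∨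
      (k = 0 ∧ o = some (i, false) ∧ (i, false) ∈ c j)
  | Sum.inr _, Sum.inl _ => False

/-- The graph `G(Γ)` built from the SATISFIABILITY instance `Γ` whose clauses are given by `c`. -/
def satGraph {n m : ℕ} (c : Fin m → Finset (Fin n × Bool)) : SimpleGraph (SatV n m) :=
  SimpleGraph.fromRel (satRel c)

/-- The matching arising from `{u_i t_i : i ∈ [n]}` by adding, for every `j ∈ [m]`, the edge of
the clique on `C_j` joining the vertices `Sum.inr (j, p j)` and `Sum.inr (j, q j)`. -/
def M3 {n m : ℕ} (c : Fin m → Finset (Fin n × Bool)) (p q : Fin m → Option (Fin n × Bool)) :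
    (satGraph c).Subgraph :=
  pairsSubgraph (satGraph c)
    ({pr | ∃ i : Fin n, pr = (Sum.inl (i, 2), Sum.inl (i, 0))} ∪
     {pr | ∃ j : Fin m, pr = (Sum.inr (j, p j), Sum.inr (j, q j))})

open SimpleGraph Walk

variable {V : Type*} {G : SimpleGraph V}

lemma cycle_start_two_nbrs {v : V} {c : G.Walk v v} (hc : c.IsCycle) :
    ∃ a b, a ≠ b ∧ G.Adj v a ∧ G.Adj v b ∧ a ∈ c.support ∧ b ∈ c.support := by
  cases c with
  | nil => exact absurd hc Walk.IsCycle.not_of_nil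
  | @cons _ w _ h q =>
    have hq := (Walk.cons_isCycle_iff q h).mp hc
    have hlen : 2 ≤ q.length := by
      have := hc.three_le_length
      simp only [Walk.length_cons] at this
      omega
    have hnil : ¬ q.reverse.Nil := by
      rw [Walk.not_nil_iff_lt_length, Walk.length_reverse]; omega
    obtain ⟨x, h', q', hq'⟩ := Walk.not_nil_iff.mp hnil
    have hbadj : G.Adj v x := h'
    have hxw : x ≠ w := by
      intro hxw
      apply hq.2
      have : s(v, x) ∈ q.reverse.edges := by rw [hq']; simp
      rw [Walk.edges_reverse, List.mem_reverse] at this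
      rwa [hxw] at this
    have hxsupp : x ∈ q.support := by
      have : x ∈ q.reverse.support := by rw [hq']; simp
      rwa [Walk.support_reverse, List.mem_reverse] at this
    exact ⟨w, x, fun e => hxw e.symm, h, hbadj, by simp, by simp [hxsupp]⟩

lemma mem_tail_support_closed {v y : V} {c : G.Walk v v} (hnil : ¬ c.Nil)
    (hy : y ∈ c.support) : y ∈ c.support.tail := by
  cases c with
  | nil => exact absurd Walk.Nil.nil hnil
  | cons h q =>
    simp only [Walk.support_cons, List.tail_cons, List.mem_cons] at hy ⊢
    rcases hy with rfl | hy
    · exact q.end_mem_support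
    · exact hy

lemma cycle_two_nbrs [DecidableEq V] {v x : V} {c : G.Walk v v} (hc : c.IsCycle) (hx : x ∈ c.support) :
    ∃ a b, a ≠ b ∧ G.Adj x a ∧ G.Adj x b ∧ a ∈ c.support ∧ b ∈ c.support := by
  have hrc := hc.rotate hx
  obtain ⟨a, b, hab, ha, hb, has, hbs⟩ := cycle_start_two_nbrs hrc
  have hperm := Walk.support_rotate c _ hx
  have trans : ∀ z, z ∈ (c.rotate _ hx).support → z ∈ c.support := by
    intro z hz
    have := mem_tail_support_closed hrc.not_nil hz
    have := hperm.perm.mem_iff.mp this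
    exact List.mem_of_mem_tail this
  exact ⟨a, b, hab, ha, hb, trans a has, trans b hbs⟩
section Sat
variable {n m : ℕ} (c : Fin m → Finset (Fin n × Bool)) (p q : Fin m → Option (Fin n × Bool))

lemma satGraph_adj {x y : SatV n m} :
    (satGraph c).Adj x y ↔ x ≠ y ∧ (satRel c x y ∨ satRel c y x) :=
  SimpleGraph.fromRel_adj _ x y

lemma m3_verts (hpq : ∀ j, (satGraph c).Adj (Sum.inr (j, p j)) (Sum.inr (j, q j))) :
    (M3 c p q).verts = {x | (∃ i : Fin n, x = Sum.inl (i, 2) ∨ x = Sum.inl (i, 0)) ∨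
      ∃ j : Fin m, x = Sum.inr (j, p j) ∨ x = Sum.inr (j, q j)} := by
  ext x
  constructor
  · rintro ⟨a, b, ⟨_, hs⟩, hx⟩
    simp only [M3, Set.mem_union, Set.mem_setOf_eq] at hs
    rcases hs with (⟨i, hi⟩ | ⟨j, hj⟩) | (⟨i, hi⟩ | ⟨j, hj⟩) <;>
      [ (rw [Prod.ext_iff] at hi);
        (rw [Prod.ext_iff] at hj);
        (rw [Prod.ext_iff] at hi);
        (rw [Prod.ext_iff] at hj)] <;>
      rcases hx with rfl | rfl
    · exact Or.inl ⟨i, Or.inl hi.1⟩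
    · exact Or.inl ⟨i, Or.inr hi.2⟩
    · exact Or.inr ⟨j, Or.inl hj.1⟩
    · exact Or.inr ⟨j, Or.inr hj.2⟩
    · exact Or.inl ⟨i, Or.inr hi.2⟩
    · exact Or.inl ⟨i, Or.inl hi.1⟩
    · exact Or.inr ⟨j, Or.inr hj.2⟩
    · exact Or.inr ⟨j, Or.inl hj.1⟩
  · have tri : ∀ i : Fin n, (satGraph c).Adj (Sum.inl (i, 2)) (Sum.inl (i, 0)) := by
      intro i
      rw [satGraph_adj]
      exact ⟨by simp, Or.inl ⟨rfl, by decide⟩⟩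
    rintro (⟨i, rfl | rfl⟩ | ⟨j, rfl | rfl⟩)
    · exact ⟨_, _, ⟨tri i, Or.inl (Or.inl ⟨i, rfl⟩)⟩, Or.inl rfl⟩
    · exact ⟨_, _, ⟨tri i, Or.inl (Or.inl ⟨i, rfl⟩)⟩, Or.inr rfl⟩
    · exact ⟨_, _, ⟨hpq j, Or.inl (Or.inr ⟨j, rfl⟩)⟩, Or.inl rfl⟩
    · exact ⟨_, _, ⟨hpq j, Or.inl (Or.inr ⟨j, rfl⟩)⟩, Or.inr rfl⟩

end Sat
section Sat2
variable {n m : ℕ} {c : Fin m → Finset (Fin n × Bool)} {p q : Fin m → Option (Fin n × Bool)}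

lemma nbr_u (hpq : ∀ j, (satGraph c).Adj (Sum.inr (j, p j)) (Sum.inr (j, q j)))
    {i : Fin n} {y : SatV n m} (hy : y ∈ (M3 c p q).verts)
    (hadj : (satGraph c).Adj (Sum.inl (i, 2)) y) : y = Sum.inl (i, 0) := by
  rw [m3_verts c p q hpq] at hy
  rw [satGraph_adj] at hadj
  obtain ⟨hne, hrel⟩ := hadj
  rcases hy with (⟨i', rfl | rfl⟩ | ⟨j, rfl | rfl⟩)
  · exfalso; simp [satRel] at hrel
  · simp only [satRel] at hrel
    have : i = i' := by
      rcases hrel with ⟨h, _⟩ | ⟨h, _⟩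
      exacts [h, h.symm]
    rw [this]
  · exfalso; simp [satRel] at hrel
  · exfalso; simp [satRel] at hrel

lemma nbr_t (hpq : ∀ j, (satGraph c).Adj (Sum.inr (j, p j)) (Sum.inr (j, q j)))
    {i : Fin n} {y : SatV n m} (hy : y ∈ (M3 c p q).verts)
    (hadj : (satGraph c).Adj (Sum.inl (i, 0)) y) :
    y = Sum.inl (i, 2) ∨
      ∃ j : Fin m, (i, false) ∈ c j ∧ y = Sum.inr (j, some (i, false)) := by
  rw [m3_verts c p q hpq] at hy
  rw [satGraph_adj] at hadj
  obtain ⟨hne, hrel⟩ := hadj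
  rcases hy with (⟨i', rfl | rfl⟩ | ⟨j, rfl | rfl⟩)
  · left
    simp only [satRel] at hrel
    have : i = i' := by
      rcases hrel with ⟨h, _⟩ | ⟨h, _⟩
      exacts [h, h.symm]
    rw [this]
  · exfalso; simp [satRel] at hrel
  · right
    refine ⟨j, ?_⟩
    simp only [satRel] at hrel
    rcases hrel with (⟨h1, _⟩ | ⟨_, h2, h3⟩) | h
    · exact absurd h1 (by decide)
    · exact ⟨h3, by rw [h2]⟩
    · exact absurd h (by simp)
  · right
    refine ⟨j, ?_⟩
    simp only [satRel] at hrel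
    rcases hrel with (⟨h1, _⟩ | ⟨_, h2, h3⟩) | h
    · exact absurd h1 (by decide)
    · exact ⟨h3, by rw [h2]⟩
    · exact absurd h (by simp)

lemma nbr_rr {j j' : Fin m} {o o' : Option (Fin n × Bool)}
    (hadj : (satGraph c).Adj (Sum.inr (j, o)) (Sum.inr (j', o'))) : j = j' := by
  rw [satGraph_adj] at hadj
  rcases hadj.2 with h | h <;> simp only [satRel] at h
  exacts [h.1, h.1.symm]

lemma m3_neg_unique (hneg : ∀ i : Fin n, (Finset.univ.filter fun j => (i, false) ∈ c j).card ≤ 1)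
    {i : Fin n} {j j' : Fin m} (h1 : (i, false) ∈ c j) (h2 : (i, false) ∈ c j') : j = j' := by
  by_contra hne
  have hsub : ({j, j'} : Finset (Fin m)) ⊆ Finset.univ.filter (fun j => (i, false) ∈ c j) := by
    intro x hx
    simp only [Finset.mem_insert, Finset.mem_singleton] at hx
    rcases hx with rfl | rfl <;> simp [h1, h2]
  have := (Finset.card_le_card hsub).trans (hneg i)
  rw [Finset.card_pair hne] at this
  omega

lemma m3_pair_cases {a b : SatV n m} (h : (M3 c p q).Adj a b) :
    (∃ i, a = Sum.inl (i, 2) ∧ b = Sum.inl (i, 0)) ∨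
    (∃ i, a = Sum.inl (i, 0) ∧ b = Sum.inl (i, 2)) ∨
    (∃ j, a = Sum.inr (j, p j) ∧ b = Sum.inr (j, q j)) ∨
    (∃ j, a = Sum.inr (j, q j) ∧ b = Sum.inr (j, p j)) := by
  obtain ⟨_, hs⟩ := h
  simp only [M3, Set.mem_union, Set.mem_setOf_eq, Prod.ext_iff] at hs
  rcases hs with (⟨i, hi⟩ | ⟨j, hj⟩) | (⟨i, hi⟩ | ⟨j, hj⟩)
  · exact Or.inl ⟨i, hi⟩
  · exact Or.inr (Or.inr (Or.inl ⟨j, hj⟩))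
  · exact Or.inr (Or.inl ⟨i, hi.2, hi.1⟩)
  · exact Or.inr (Or.inr (Or.inr ⟨j, hj.2, hj.1⟩))

end Sat2
section Sat3
variable {n m : ℕ} {c : Fin m → Finset (Fin n × Bool)} {p q : Fin m → Option (Fin n × Bool)}

lemma m3_adj_mk {a b : SatV n m} (hadj : (satGraph c).Adj a b)
    (hs : (∃ i : Fin n, (a, b) = (Sum.inl (i, 2), Sum.inl (i, 0)) ∨
            (b, a) = (Sum.inl (i, 2), Sum.inl (i, 0))) ∨
          ∃ j : Fin m, (a, b) = (Sum.inr (j, p j), Sum.inr (j, q j)) ∨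
            (b, a) = (Sum.inr (j, p j), Sum.inr (j, q j))) :
    (M3 c p q).Adj a b := by
  refine ⟨hadj, ?_⟩
  simp only [M3, Set.mem_union, Set.mem_setOf_eq]
  rcases hs with ⟨i, h | h⟩ | ⟨j, h | h⟩
  · exact Or.inl (Or.inl ⟨i, h⟩)
  · exact Or.inr (Or.inl ⟨i, h⟩)
  · exact Or.inl (Or.inr ⟨j, h⟩)
  · exact Or.inr (Or.inr ⟨j, h⟩)

lemma m3_isMatching (hpq : ∀ j, (satGraph c).Adj (Sum.inr (j, p j)) (Sum.inr (j, q j))) :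
    (M3 c p q).IsMatching := by
  have tri : ∀ i : Fin n, (satGraph c).Adj (Sum.inl (i, 2)) (Sum.inl (i, 0)) := by
    intro i
    rw [satGraph_adj]
    exact ⟨by simp, Or.inl ⟨rfl, by decide⟩⟩
  have hne : ∀ j, p j ≠ q j := by
    intro j h
    exact (hpq j).ne (by rw [h])
  intro v hv
  rw [m3_verts c p q hpq] at hv
  rcases hv with (⟨i, rfl | rfl⟩ | ⟨j, rfl | rfl⟩)
  · refine ⟨Sum.inl (i, 0), m3_adj_mk (tri i) (Or.inl ⟨i, Or.inl rfl⟩), ?_⟩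
    intro w hw
    rcases m3_pair_cases hw with ⟨i', h1, h2⟩ | ⟨i', h1, h2⟩ | ⟨j', h1, h2⟩ | ⟨j', h1, h2⟩
    · obtain ⟨rfl, -⟩ : i' = i ∧ (2 : Fin 3) = 2 := by simpa using h1.symm
      exact h2
    · exact absurd h1.symm (by simp)
    · exact absurd h1.symm (by simp)
    · exact absurd h1.symm (by simp)
  · refine ⟨Sum.inl (i, 2), m3_adj_mk (tri i).symm (Or.inl ⟨i, Or.inr rfl⟩), ?_⟩
    intro w hw
    rcases m3_pair_cases hw with ⟨i', h1, h2⟩ | ⟨i', h1, h2⟩ | ⟨j', h1, h2⟩ | ⟨j', h1, h2⟩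
    · exact absurd h1.symm (by simp)
    · obtain ⟨rfl, -⟩ : i' = i ∧ (0 : Fin 3) = 0 := by simpa using h1.symm
      exact h2
    · exact absurd h1.symm (by simp)
    · exact absurd h1.symm (by simp)
  · refine ⟨Sum.inr (j, q j), m3_adj_mk (hpq j) (Or.inr ⟨j, Or.inl rfl⟩), ?_⟩
    intro w hw
    rcases m3_pair_cases hw with ⟨i', h1, h2⟩ | ⟨i', h1, h2⟩ | ⟨j', h1, h2⟩ | ⟨j', h1, h2⟩
    · exact absurd h1.symm (by simp)
    · exact absurd h1.symm (by simp)
    · obtain ⟨rfl, -⟩ : j' = j ∧ p j' = p j := by simpa using h1.symm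
      exact h2
    · obtain ⟨hj, h⟩ : j' = j ∧ q j' = p j := by simpa using h1.symm
      subst hj
      exact absurd h.symm (hne j')
  · refine ⟨Sum.inr (j, p j), m3_adj_mk (hpq j).symm (Or.inr ⟨j, Or.inr rfl⟩), ?_⟩
    intro w hw
    rcases m3_pair_cases hw with ⟨i', h1, h2⟩ | ⟨i', h1, h2⟩ | ⟨j', h1, h2⟩ | ⟨j', h1, h2⟩
    · exact absurd h1.symm (by simp)
    · exact absurd h1.symm (by simp)
    · obtain ⟨hj, h⟩ : j' = j ∧ p j' = q j := by simpa using h1.symm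
      subst hj
      exact absurd h (hne j')
    · obtain ⟨rfl, -⟩ : j' = j ∧ q j' = q j := by simpa using h1.symm
      exact h2
end Sat3
section Sat4
variable {n m : ℕ} {c : Fin m → Finset (Fin n × Bool)} {p q : Fin m → Option (Fin n × Bool)}

lemma induce_adj_coe {s : Set (SatV n m)} {a b : s}
    (h : ((satGraph c).induce s).Adj a b) : (satGraph c).Adj ↑a ↑b := h

lemma m3_acyclic
    (hneg : ∀ i : Fin n, (Finset.univ.filter fun j => (i, false) ∈ c j).card ≤ 1)
    (hpq : ∀ j, (satGraph c).Adj (Sum.inr (j, p j)) (Sum.inr (j, q j))) :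
    ((satGraph c).induce (M3 c p q).verts).IsAcyclic := by
  classical
  intro v₀ cyc hcyc
  have h2 : ∀ (x : ↥(M3 c p q).verts) (i : Fin n), (↑x : SatV n m) = Sum.inl (i, 2) →
      x ∉ cyc.support := by
    intro x i hx hmem
    obtain ⟨a, b, hab, ha, hb, -, -⟩ := cycle_two_nbrs hcyc hmem
    have ha' := induce_adj_coe ha
    have hb' := induce_adj_coe hb
    rw [hx] at ha' hb'
    have haa := nbr_u hpq a.2 ha'
    have hbb := nbr_u hpq b.2 hb'
    exact hab (Subtype.ext (haa.trans hbb.symm))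
  have h0 : ∀ (x : ↥(M3 c p q).verts) (i : Fin n), (↑x : SatV n m) = Sum.inl (i, 0) →
      x ∉ cyc.support := by
    intro x i hx hmem
    obtain ⟨a, b, hab, ha, hb, has, hbs⟩ := cycle_two_nbrs hcyc hmem
    have ha' := induce_adj_coe ha
    have hb' := induce_adj_coe hb
    rw [hx] at ha' hb'
    rcases nbr_t hpq a.2 ha' with h | ⟨j, hcj, haj⟩
    · exact h2 a i h has
    rcases nbr_t hpq b.2 hb' with h | ⟨j', hcj', hbj'⟩
    · exact h2 b i h hbs
    have hjj : j = j' := m3_neg_unique hneg hcj hcj'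
    exact hab (Subtype.ext (by rw [haj, hbj', hjj]))
  have hr : ∀ y : ↥(M3 c p q).verts, y ∈ cyc.support →
      ∀ (j : Fin m) (o : Option (Fin n × Bool)),
      (satGraph c).Adj (Sum.inr (j, o)) ↑y →
      (↑y : SatV n m) = Sum.inr (j, p j) ∨ (↑y : SatV n m) = Sum.inr (j, q j) := by
    intro y hy j o hadj
    have hy2 := (Set.ext_iff.mp (m3_verts c p q hpq) ↑y).mp y.2
    rcases hy2 with ⟨i, h | h⟩ | ⟨j'', h | h⟩
    · exact absurd hy (h2 y i h)
    · exact absurd hy (h0 y i h)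
    · rw [h] at hadj
      have hj := nbr_rr hadj
      exact Or.inl (by rw [h, hj])
    · rw [h] at hadj
      have hj := nbr_rr hadj
      exact Or.inr (by rw [h, hj])
  have hv₀ := (Set.ext_iff.mp (m3_verts c p q hpq) ↑v₀).mp v₀.2
  have hmem := cyc.start_mem_support
  rcases hv₀ with ⟨i, h | h⟩ | ⟨j, h | h⟩
  · exact h2 v₀ i h hmem
  · exact h0 v₀ i h hmem
  all_goals {
    obtain ⟨a, b, hab, ha, hb, has, hbs⟩ := cycle_two_nbrs hcyc hmem
    have ha' := induce_adj_coe ha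
    have hb' := induce_adj_coe hb
    rw [h] at ha' hb'
    have hra := hr a has _ _ ha'
    have hrb := hr b hbs _ _ hb'
    rcases hra with h1 | h1 <;> rcases hrb with h2' | h2' <;>
      first
        | exact ha'.ne h1.symm
        | exact hb'.ne h2'.symm
        | exact hab (Subtype.ext (h1.trans h2'.symm))
  }
end Sat4
section Sat5
variable {n m : ℕ} {c : Fin m → Finset (Fin n × Bool)} {p q : Fin m → Option (Fin n × Bool)}

lemma m3_edge_ncard (hpq : ∀ j, (satGraph c).Adj (Sum.inr (j, p j)) (Sum.inr (j, q j))) :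
    (M3 c p q).edgeSet.ncard = n + m := by
  classical
  have tri : ∀ i : Fin n, (satGraph c).Adj (Sum.inl (i, 2)) (Sum.inl (i, 0)) := by
    intro i
    rw [satGraph_adj]
    exact ⟨by simp, Or.inl ⟨rfl, by decide⟩⟩
  set f : Fin n ⊕ Fin m → Sym2 (SatV n m) :=
    fun x => x.elim (fun i => s(Sum.inl (i, 2), Sum.inl (i, 0)))
      (fun j => s(Sum.inr (j, p j), Sum.inr (j, q j))) with hf
  have h1 : ∀ x, f x ∈ (M3 c p q).edgeSet := by
    rintro (i | j)
    · exact SimpleGraph.Subgraph.mem_edgeSet.mpr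
        (m3_adj_mk (tri i) (Or.inl ⟨i, Or.inl rfl⟩))
    · exact SimpleGraph.Subgraph.mem_edgeSet.mpr
        (m3_adj_mk (hpq j) (Or.inr ⟨j, Or.inl rfl⟩))
  have hrange : (M3 c p q).edgeSet = Set.range f := by
    refine Set.Subset.antisymm ?_ ?_
    · intro e he
      induction e with
      | h a b =>
        rw [SimpleGraph.Subgraph.mem_edgeSet] at he
        rcases m3_pair_cases he with ⟨i, rfl, rfl⟩ | ⟨i, rfl, rfl⟩ | ⟨j, rfl, rfl⟩ | ⟨j, rfl, rfl⟩
        · exact ⟨Sum.inl i, rfl⟩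
        · exact ⟨Sum.inl i, Sym2.eq_swap⟩
        · exact ⟨Sum.inr j, rfl⟩
        · exact ⟨Sum.inr j, Sym2.eq_swap⟩
    · rintro e ⟨x, rfl⟩
      exact h1 x
  have hinj : Function.Injective f := by
    rintro (i | j) (i' | j') h <;>
      simp only [hf, Sum.elim_inl, Sum.elim_inr, Sym2.eq_iff, Sum.inl.injEq, Sum.inr.injEq,
        Prod.mk.injEq] at h
    · rcases h with ⟨⟨h1', -⟩, -⟩ | ⟨⟨-, h2'⟩, -⟩
      · rw [h1']
      · exact absurd h2' (by decide)
    · tauto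
    · tauto
    · rcases h with ⟨⟨h1', -⟩, -⟩ | ⟨⟨h1', -⟩, -⟩ <;> rw [h1']
  rw [hrange, ← Nat.card_coe_set_eq, Nat.card_range_of_injective hinj]
  simp

end Sat5
/-- The matching arising from `{u_i t_i : i ∈ [n]}` by adding, for every `j ∈ [m]`, an arbitrary
edge of `E_G(C_j)`, is an acyclic matching in `G(Γ)` of size `n + m`; in particular
`ν_ac(G(Γ)) ≥ n + m`. -/
theorem m3_isAcyclicMatching {n m : ℕ} (c : Fin m → Finset (Fin n × Bool))
    (hsize : ∀ j, (c j).card = 2 ∨ (c j).card = 3)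
    (hpos : ∀ i : Fin n, (Finset.univ.filter fun j => (i, true) ∈ c j).card ≤ 2)
    (hneg : ∀ i : Fin n, (Finset.univ.filter fun j => (i, false) ∈ c j).card ≤ 1)
    (hcon : ∀ j, ∀ i : Fin n, ¬((i, true) ∈ c j ∧ (i, false) ∈ c j))
    (p q : Fin m → Option (Fin n × Bool))
    (hpq : ∀ j, (satGraph c).Adj (Sum.inr (j, p j)) (Sum.inr (j, q j))) :
    IsAcyclicMatching (satGraph c) (M3 c p q) ∧ (M3 c p q).edgeSet.ncard = n + m ∧
      n + m ≤ nuAc (satGraph c) := by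
  have hmatch := m3_isMatching (c := c) (p := p) (q := q) hpq
  have hacyc := m3_acyclic (c := c) (p := p) (q := q) hneg hpq
  have hcard := m3_edge_ncard (c := c) (p := p) (q := q) hpq
  refine ⟨⟨hmatch, hacyc⟩, hcard, ?_⟩
  have hmem : n + m ∈ {k : ℕ | ∃ M : (satGraph c).Subgraph,
      IsAcyclicMatching (satGraph c) M ∧ M.edgeSet.ncard = k} :=
    ⟨M3 c p q, ⟨hmatch, hacyc⟩, hcard⟩
  refine le_csSup ⟨(Set.univ : Set (Sym2 (SatV n m))).ncard, ?_⟩ hmem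
  rintro k ⟨M, -, rfl⟩
  exact Set.ncard_le_ncard (Set.subset_univ _) Set.finite_univ
end

section
/- If t: {x_1,…,x_n} → {0,1} is a satisfying truth assignment of Γ, then the matching M that arises from {u_i f_i : i ∈ [n], t(x_i) = 0} ∪ {u_i t_i : i ∈ [n], t(x_i) = 1} by adding, for every j ∈ [m], an edge v_j w where the literal identified with the vertex w ∈ C_j is true under t, is an induced matching in G(Γ) of size n+m. -/
open SimpleGraph

/-- The matching arising from `{u_i f_i : t(x_i) = 0} ∪ {u_i t_i : t(x_i) = 1}` by adding, for
every `j ∈ [m]`, the edge `v_j w` where `w = Sum.inr (j, some (g j))` is a vertex of `C_j`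
identified with a literal that is true under `t`. -/
def M5 {n m : ℕ} (c : Fin m → Finset (Fin n × Bool)) (t : Fin n → Bool)
    (g : Fin m → Fin n × Bool) : (satGraph c).Subgraph :=
  pairsSubgraph (satGraph c)
    ({pr | ∃ i : Fin n, (t i = false ∧ pr = (Sum.inl (i, 2), Sum.inl (i, 1))) ∨
        (t i = true ∧ pr = (Sum.inl (i, 2), Sum.inl (i, 0)))} ∪
     {pr | ∃ j : Fin m, pr = (Sum.inr (j, none), Sum.inr (j, some (g j)))})

section Aux
variable {n m : ℕ}

def uiV (i : Fin n) : SatV n m := Sum.inl (i, 2)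
def wiV (t : Fin n → Bool) (i : Fin n) : SatV n m := Sum.inl (i, if t i then 0 else 1)
def vjV (j : Fin m) : SatV n m := Sum.inr (j, none)
def wjV (g : Fin m → Fin n × Bool) (j : Fin m) : SatV n m := Sum.inr (j, some (g j))

lemma adj_ui_wi (c : Fin m → Finset (Fin n × Bool)) (t : Fin n → Bool) (i : Fin n) :
    (satGraph c).Adj (uiV i) (wiV t i) := by
  unfold satGraph uiV wiV
  cases h : t i <;> simp [satRel, SimpleGraph.fromRel_adj]

lemma adj_vj_wj (c : Fin m → Finset (Fin n × Bool)) (g : Fin m → Fin n × Bool)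
    (hg : ∀ j, g j ∈ c j) (j : Fin m) :
    (satGraph c).Adj (vjV j) (wjV g j) := by
  unfold satGraph vjV wjV
  simp [satRel, SimpleGraph.fromRel_adj, hg j]

lemma m5_adj (c : Fin m → Finset (Fin n × Bool)) (t : Fin n → Bool)
    (g : Fin m → Fin n × Bool) (hg : ∀ j, g j ∈ c j) (a b : SatV n m) :
    (M5 c t g).Adj a b ↔
      (∃ i, (a = uiV i ∧ b = wiV t i) ∨ (a = wiV t i ∧ b = uiV i)) ∨
      (∃ j, (a = vjV j ∧ b = wjV g j) ∨ (a = wjV g j ∧ b = vjV j)) := by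
  constructor
  · rintro ⟨hadj, hmem | hmem⟩ <;>
      rcases hmem with (⟨i, ⟨hti, hpr⟩ | ⟨hti, hpr⟩⟩ | ⟨j, hpr⟩) <;>
      rcases Prod.mk.injEq .. ▸ hpr with ⟨rfl, rfl⟩
    · exact Or.inl ⟨i, Or.inl ⟨rfl, by simp [wiV, hti]⟩⟩
    · exact Or.inl ⟨i, Or.inl ⟨rfl, by simp [wiV, hti]⟩⟩
    · exact Or.inr ⟨j, Or.inl ⟨rfl, rfl⟩⟩
    · exact Or.inl ⟨i, Or.inr ⟨by simp [wiV, hti], rfl⟩⟩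
    · exact Or.inl ⟨i, Or.inr ⟨by simp [wiV, hti], rfl⟩⟩
    · exact Or.inr ⟨j, Or.inr ⟨rfl, rfl⟩⟩
  · rintro (⟨i, ⟨rfl, rfl⟩ | ⟨rfl, rfl⟩⟩ | ⟨j, ⟨rfl, rfl⟩ | ⟨rfl, rfl⟩⟩)
    · exact ⟨adj_ui_wi c t i, Or.inl (Or.inl ⟨i, by cases h : t i <;> simp [uiV, wiV, h]⟩)⟩
    · exact ⟨(adj_ui_wi c t i).symm, Or.inr (Or.inl ⟨i, by cases h : t i <;> simp [uiV, wiV, h]⟩)⟩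
    · exact ⟨adj_vj_wj c g hg j, Or.inl (Or.inr ⟨j, rfl⟩)⟩
    · exact ⟨(adj_vj_wj c g hg j).symm, Or.inr (Or.inr ⟨j, rfl⟩)⟩

lemma m5_verts (c : Fin m → Finset (Fin n × Bool)) (t : Fin n → Bool)
    (g : Fin m → Fin n × Bool) (hg : ∀ j, g j ∈ c j) (v : SatV n m) :
    v ∈ (M5 c t g).verts ↔
      (∃ i, v = uiV i ∨ v = wiV t i) ∨ (∃ j, v = vjV j ∨ v = wjV g j) := by
  constructor
  · rintro ⟨a, b, hab, h⟩
    rw [show ((satGraph c).Adj a b ∧ _) = (M5 c t g).Adj a b from rfl] at hab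
    rcases (m5_adj c t g hg a b).1 hab with
        (⟨i, ⟨rfl, rfl⟩ | ⟨rfl, rfl⟩⟩ | ⟨j, ⟨rfl, rfl⟩ | ⟨rfl, rfl⟩⟩) <;>
      rcases h with rfl | rfl <;>
      first
        | exact Or.inl ⟨i, Or.inl rfl⟩
        | exact Or.inl ⟨i, Or.inr rfl⟩
        | exact Or.inr ⟨j, Or.inl rfl⟩
        | exact Or.inr ⟨j, Or.inr rfl⟩
  · rintro (⟨i, rfl | rfl⟩ | ⟨j, rfl | rfl⟩)
    · exact (M5 c t g).edge_vert ((m5_adj c t g hg _ _).2 (Or.inl ⟨i, Or.inl ⟨rfl, rfl⟩⟩))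
    · exact ((M5 c t g).edge_vert ((m5_adj c t g hg _ _).2
        (Or.inl ⟨i, Or.inr ⟨rfl, rfl⟩⟩)))
    · exact (M5 c t g).edge_vert ((m5_adj c t g hg _ _).2 (Or.inr ⟨j, Or.inl ⟨rfl, rfl⟩⟩))
    · exact (M5 c t g).edge_vert ((m5_adj c t g hg _ _).2 (Or.inr ⟨j, Or.inr ⟨rfl, rfl⟩⟩))

end Aux
section Aux2
variable {n m : ℕ} {t : Fin n → Bool} {g : Fin m → Fin n × Bool}

@[simp] lemma ui_eq_ui {i i' : Fin n} : (uiV i : SatV n m) = uiV i' ↔ i = i' := by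
  unfold uiV; simp

@[simp] lemma ui_ne_wi {i i' : Fin n} : (uiV i : SatV n m) ≠ wiV t i' := by
  unfold uiV wiV; cases t i' <;> simp

@[simp] lemma wi_ne_ui {i i' : Fin n} : (wiV t i : SatV n m) ≠ uiV i' := Ne.symm ui_ne_wi

@[simp] lemma wi_eq_wi {i i' : Fin n} : (wiV t i : SatV n m) = wiV t i' ↔ i = i' := by
  unfold wiV
  constructor
  · intro h
    exact ((Prod.mk.injEq ..).mp (Sum.inl.inj h)).1
  · rintro rfl; rfl

@[simp] lemma vj_eq_vj {j j' : Fin m} : (vjV j : SatV n m) = vjV j' ↔ j = j' := by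
  unfold vjV; simp

@[simp] lemma vj_ne_wj {j j' : Fin m} : (vjV j : SatV n m) ≠ wjV g j' := by
  unfold vjV wjV; simp

@[simp] lemma wj_ne_vj {j j' : Fin m} : (wjV g j : SatV n m) ≠ vjV j' := Ne.symm vj_ne_wj

@[simp] lemma wj_eq_wj {j j' : Fin m} : (wjV g j : SatV n m) = wjV g j' ↔ j = j' := by
  unfold wjV
  constructor
  · intro h
    exact ((Prod.mk.injEq ..).mp (Sum.inr.inj h)).1
  · rintro rfl; rfl

@[simp] lemma ui_ne_vj {i : Fin n} {j : Fin m} : (uiV i : SatV n m) ≠ vjV j := by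
  unfold uiV vjV; simp

@[simp] lemma ui_ne_wj {i : Fin n} {j : Fin m} : (uiV i : SatV n m) ≠ wjV g j := by
  unfold uiV wjV; simp

@[simp] lemma wi_ne_vj {i : Fin n} {j : Fin m} : (wiV t i : SatV n m) ≠ vjV j := by
  unfold wiV vjV; simp

@[simp] lemma wi_ne_wj {i : Fin n} {j : Fin m} : (wiV t i : SatV n m) ≠ wjV g j := by
  unfold wiV wjV; simp

@[simp] lemma vj_ne_ui {i : Fin n} {j : Fin m} : (vjV j : SatV n m) ≠ uiV i := Ne.symm ui_ne_vj
@[simp] lemma wj_ne_ui {i : Fin n} {j : Fin m} : (wjV g j : SatV n m) ≠ uiV i := Ne.symm ui_ne_wj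
@[simp] lemma vj_ne_wi {i : Fin n} {j : Fin m} : (vjV j : SatV n m) ≠ wiV t i := Ne.symm wi_ne_vj
@[simp] lemma wj_ne_wi {i : Fin n} {j : Fin m} : (wjV g j : SatV n m) ≠ wiV t i := Ne.symm wi_ne_wj

lemma m5_matching (c : Fin m → Finset (Fin n × Bool)) (t : Fin n → Bool)
    (g : Fin m → Fin n × Bool) (hg : ∀ j, g j ∈ c j) :
    (M5 c t g).IsMatching := by
  intro v hv
  rcases (m5_verts c t g hg v).1 hv with (⟨i, rfl | rfl⟩ | ⟨j, rfl | rfl⟩)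
  · refine ⟨wiV t i, (m5_adj c t g hg _ _).2 (Or.inl ⟨i, Or.inl ⟨rfl, rfl⟩⟩), ?_⟩
    intro y hy
    rcases (m5_adj c t g hg _ _).1 hy with
      (⟨i', ⟨h1, rfl⟩ | ⟨h1, rfl⟩⟩ | ⟨j', ⟨h1, rfl⟩ | ⟨h1, rfl⟩⟩) <;> simp_all
  · refine ⟨uiV i, (m5_adj c t g hg _ _).2 (Or.inl ⟨i, Or.inr ⟨rfl, rfl⟩⟩), ?_⟩
    intro y hy
    rcases (m5_adj c t g hg _ _).1 hy with
      (⟨i', ⟨h1, rfl⟩ | ⟨h1, rfl⟩⟩ | ⟨j', ⟨h1, rfl⟩ | ⟨h1, rfl⟩⟩) <;> simp_all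
  · refine ⟨wjV g j, (m5_adj c t g hg _ _).2 (Or.inr ⟨j, Or.inl ⟨rfl, rfl⟩⟩), ?_⟩
    intro y hy
    rcases (m5_adj c t g hg _ _).1 hy with
      (⟨i', ⟨h1, rfl⟩ | ⟨h1, rfl⟩⟩ | ⟨j', ⟨h1, rfl⟩ | ⟨h1, rfl⟩⟩) <;> simp_all
  · refine ⟨vjV j, (m5_adj c t g hg _ _).2 (Or.inr ⟨j, Or.inr ⟨rfl, rfl⟩⟩), ?_⟩
    intro y hy
    rcases (m5_adj c t g hg _ _).1 hy with
      (⟨i', ⟨h1, rfl⟩ | ⟨h1, rfl⟩⟩ | ⟨j', ⟨h1, rfl⟩ | ⟨h1, rfl⟩⟩) <;> simp_all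

end Aux2
section Aux3
variable {n m : ℕ}

lemma m5_induced_adj (c : Fin m → Finset (Fin n × Bool)) (t : Fin n → Bool)
    (g : Fin m → Fin n × Bool) (hg : ∀ j, g j ∈ c j ∧ t (g j).1 = (g j).2)
    (a b : SatV n m) (ha : a ∈ (M5 c t g).verts) (hb : b ∈ (M5 c t g).verts)
    (hadj : (satGraph c).Adj a b) : (M5 c t g).Adj a b := by
  have hg1 : ∀ j, g j ∈ c j := fun j => (hg j).1
  rw [satGraph, SimpleGraph.fromRel_adj] at hadj
  obtain ⟨hne, hrel⟩ := hadj
  rcases (m5_verts c t g hg1 a).1 ha with (⟨i, rfl | rfl⟩ | ⟨j, rfl | rfl⟩) <;>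
    rcases (m5_verts c t g hg1 b).1 hb with (⟨i', rfl | rfl⟩ | ⟨j', rfl | rfl⟩)
  -- ui ui
  · exfalso; revert hrel; unfold uiV satRel; simp
  -- ui wi
  · have hii : i = i' := by
      rcases hrel with h | h
      · exact h.1
      · exact h.1.symm
    subst hii
    exact (m5_adj c t g hg1 _ _).2 (Or.inl ⟨i, Or.inl ⟨rfl, rfl⟩⟩)
  -- ui vj
  · exfalso; revert hrel; unfold uiV vjV satRel; simp
  -- ui wj
  · exfalso; revert hrel; unfold uiV wjV satRel; simp
  -- wi ui
  · have hii : i = i' := by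
      rcases hrel with h | h
      · exact h.1
      · exact h.1.symm
    subst hii
    exact (m5_adj c t g hg1 _ _).2 (Or.inl ⟨i, Or.inr ⟨rfl, rfl⟩⟩)
  -- wi wi
  · have hii : i = i' := by
      rcases hrel with h | h
      · exact h.1
      · exact h.1.symm
    subst hii
    exact absurd rfl hne
  -- wi vj
  · exfalso; revert hrel; unfold wiV vjV satRel; cases t i <;> simp
  -- wi wj  (the interesting case)
  · exfalso
    rcases hrel with (⟨hk, ho, -⟩ | ⟨hk, ho, -⟩) | h
    · have hgj : g j' = (i, true) := Option.some.inj ho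
      have h2 := (hg j').2
      rw [hgj] at h2
      simp only [h2, if_true] at hk
      exact absurd hk (by decide)
    · have hgj : g j' = (i, false) := Option.some.inj ho
      have h2 := (hg j').2
      rw [hgj] at h2
      simp only [h2, Bool.false_eq_true, if_false] at hk
      exact absurd hk (by decide)
    · exact h
  -- vj ui
  · exfalso; revert hrel; unfold uiV vjV satRel; simp
  -- vj wi
  · exfalso; revert hrel; unfold wiV vjV satRel; cases t i' <;> simp
  -- vj vj
  · have hjj : j = j' := by
      rcases hrel with h | h
      · exact h.1
      · exact h.1.symm
    subst hjj
    exact absurd rfl hne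
  -- vj wj
  · have hjj : j = j' := by
      rcases hrel with h | h
      · exact h.1
      · exact h.1.symm
    subst hjj
    exact (m5_adj c t g hg1 _ _).2 (Or.inr ⟨j, Or.inl ⟨rfl, rfl⟩⟩)
  -- wj ui
  · exfalso; revert hrel; unfold uiV wjV satRel; simp
  -- wj wi
  · exfalso
    rcases hrel with h | (⟨hk, ho, -⟩ | ⟨hk, ho, -⟩)
    · exact h
    · have hgj : g j = (i', true) := Option.some.inj ho
      have h2 := (hg j).2
      rw [hgj] at h2
      simp only [h2, if_true] at hk
      exact absurd hk (by decide)
    · have hgj : g j = (i', false) := Option.some.inj ho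
      have h2 := (hg j).2
      rw [hgj] at h2
      simp only [h2, Bool.false_eq_true, if_false] at hk
      exact absurd hk (by decide)
  -- wj vj
  · have hjj : j = j' := by
      rcases hrel with h | h
      · exact h.1
      · exact h.1.symm
    subst hjj
    exact (m5_adj c t g hg1 _ _).2 (Or.inr ⟨j, Or.inr ⟨rfl, rfl⟩⟩)
  -- wj wj
  · have hjj : j = j' := by
      rcases hrel with h | h
      · exact h.1
      · exact h.1.symm
    subst hjj
    exact absurd rfl hne

end Aux3
section Aux4
variable {n m : ℕ}

def edgF (t : Fin n → Bool) (g : Fin m → Fin n × Bool) :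
    Fin n ⊕ Fin m → Sym2 (SatV n m)
  | Sum.inl i => s(uiV i, wiV t i)
  | Sum.inr j => s(vjV j, wjV g j)

lemma edgF_inj (t : Fin n → Bool) (g : Fin m → Fin n × Bool) :
    Function.Injective (edgF t g) := by
  intro x y h
  cases x <;> cases y <;> simp only [edgF, Sym2.eq_iff] at h <;>
    rcases h with ⟨h1, h2⟩ | ⟨h1, h2⟩ <;> simp_all

lemma m5_edgeSet (c : Fin m → Finset (Fin n × Bool)) (t : Fin n → Bool)
    (g : Fin m → Fin n × Bool) (hg : ∀ j, g j ∈ c j) :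
    (M5 c t g).edgeSet = Set.range (edgF t g) := by
  ext e
  induction e with
  | _ a b =>
    rw [SimpleGraph.Subgraph.mem_edgeSet, m5_adj c t g hg]
    constructor
    · rintro (⟨i, ⟨rfl, rfl⟩ | ⟨rfl, rfl⟩⟩ | ⟨j, ⟨rfl, rfl⟩ | ⟨rfl, rfl⟩⟩)
      · exact ⟨Sum.inl i, rfl⟩
      · exact ⟨Sum.inl i, Sym2.eq_swap⟩
      · exact ⟨Sum.inr j, rfl⟩
      · exact ⟨Sum.inr j, Sym2.eq_swap⟩
    · rintro ⟨(i | j), hx⟩ <;>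
        rw [edgF, Sym2.eq_iff] at hx <;>
        rcases hx with ⟨rfl, rfl⟩ | ⟨rfl, rfl⟩
      · exact Or.inl ⟨i, Or.inl ⟨rfl, rfl⟩⟩
      · exact Or.inl ⟨i, Or.inr ⟨rfl, rfl⟩⟩
      · exact Or.inr ⟨j, Or.inl ⟨rfl, rfl⟩⟩
      · exact Or.inr ⟨j, Or.inr ⟨rfl, rfl⟩⟩

lemma m5_ncard (c : Fin m → Finset (Fin n × Bool)) (t : Fin n → Bool)
    (g : Fin m → Fin n × Bool) (hg : ∀ j, g j ∈ c j) :
    (M5 c t g).edgeSet.ncard = n + m := by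
  rw [m5_edgeSet c t g hg]
  have : Set.range (edgF t g) = ↑(Finset.univ.image (edgF (m := m) t g)) := by
    ext e; simp
  rw [this, Set.ncard_coe_finset, Finset.card_image_of_injective _ (edgF_inj t g)]
  simp

end Aux4
/-- If `t` is a satisfying truth assignment of `Γ`, then the matching arising from
`{u_i f_i : t(x_i) = 0} ∪ {u_i t_i : t(x_i) = 1}` by adding, for every `j ∈ [m]`, an edge
`v_j w` where the literal identified with the vertex `w ∈ C_j` is true under `t`, is an induced
matching in `G(Γ)` of size `n + m`. -/
theorem m5_isInducedMatching {n m : ℕ} (c : Fin m → Finset (Fin n × Bool))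
    (hsize : ∀ j, (c j).card = 2 ∨ (c j).card = 3)
    (hpos : ∀ i : Fin n, (Finset.univ.filter fun j => (i, true) ∈ c j).card ≤ 2)
    (hneg : ∀ i : Fin n, (Finset.univ.filter fun j => (i, false) ∈ c j).card ≤ 1)
    (hcon : ∀ j, ∀ i : Fin n, ¬((i, true) ∈ c j ∧ (i, false) ∈ c j))
    (t : Fin n → Bool) (ht : ∀ j, ∃ l ∈ c j, t l.1 = l.2)
    (g : Fin m → Fin n × Bool) (hg : ∀ j, g j ∈ c j ∧ t (g j).1 = (g j).2) :
    IsInducedMatching (satGraph c) (M5 c t g) ∧ (M5 c t g).edgeSet.ncard = n + m := by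
  have hg1 : ∀ j, g j ∈ c j := fun j => (hg j).1
  have hmatch := m5_matching c t g hg1
  refine ⟨⟨hmatch, ?_⟩, m5_ncard c t g hg1⟩
  rintro ⟨v, hv⟩
  obtain ⟨w, hw, hwu⟩ := hmatch hv
  refine ⟨⟨w, (M5 c t g).edge_vert hw.symm⟩, (M5 c t g).adj_sub hw, ?_⟩
  rintro ⟨y, hy⟩ h
  exact Subtype.ext (hwu y (m5_induced_adj c t g hg v y hv hy h))
end

section
/- If ν_s(G(Γ)) = n+m, then Γ is satisfiable; moreover, there is a maximum induced matching M of G(Γ) containing, for each i ∈ [n], either u_i f_i or u_i t_i, and the truth assignment t with t(x_i) = 0 if u_i f_i ∈ M and t(x_i) = 1 if u_i t_i ∈ M satisfies Γ. -/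
open SimpleGraph

namespace SatAux
open SimpleGraph

variable {n m : ℕ} {c : Fin m → Finset (Fin n × Bool)}

/-- The block of a vertex: which triangle or clique it belongs to. -/
def blk : SatV n m → Fin n ⊕ Fin m
  | Sum.inl (i, _) => Sum.inl i
  | Sum.inr (j, _) => Sum.inr j

lemma adj_iff {v w : SatV n m} :
    (satGraph c).Adj v w ↔ v ≠ w ∧ (satRel c v w ∨ satRel c w v) :=
  SimpleGraph.fromRel_adj _ _ _

lemma adj_triangle {i : Fin n} {k k' : Fin 3} (h : k ≠ k') :
    (satGraph c).Adj (Sum.inl (i, k)) (Sum.inl (i, k')) := by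
  rw [adj_iff]
  exact ⟨by simp [h], Or.inl ⟨rfl, h⟩⟩

lemma adj_inl_inl {i i' : Fin n} {k k' : Fin 3}
    (h : (satGraph c).Adj (Sum.inl (i, k)) (Sum.inl (i', k'))) : i = i' ∧ k ≠ k' := by
  rw [adj_iff] at h
  rcases h.2 with h' | h'
  · exact ⟨h'.1, h'.2⟩
  · exact ⟨h'.1.symm, h'.2.symm⟩

lemma adj_inr_inr {j j' : Fin m} {o o' : Option (Fin n × Bool)}
    (h : (satGraph c).Adj (Sum.inr (j, o)) (Sum.inr (j', o'))) : j = j' := by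
  rw [adj_iff] at h
  rcases h.2 with h' | h'
  · exact h'.1
  · exact h'.1.symm

lemma not_adj_inl_inr_u {i : Fin n} {j : Fin m} {o : Option (Fin n × Bool)} :
    ¬ (satGraph c).Adj (Sum.inl (i, 2)) (Sum.inr (j, o)) := by
  rw [adj_iff]
  rintro ⟨-, h | h⟩
  · rcases h with ⟨h, -⟩ | ⟨h, -⟩ <;> exact absurd h (by decide)
  · exact h

lemma adj_inl_inr {i : Fin n} {k : Fin 3} {j : Fin m} {o : Option (Fin n × Bool)}
    (h : (satGraph c).Adj (Sum.inl (i, k)) (Sum.inr (j, o))) :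
    (k = 1 ∧ o = some (i, true) ∧ (i, true) ∈ c j) ∨
      (k = 0 ∧ o = some (i, false) ∧ (i, false) ∈ c j) := by
  rw [adj_iff] at h
  rcases h.2 with h' | h'
  · exact h'
  · exact h'.elim

lemma mem_of_adj_some {j : Fin m} {l : Fin n × Bool} {w : SatV n m}
    (h : (satGraph c).Adj (Sum.inr (j, some l)) w) : l ∈ c j := by
  rw [adj_iff] at h
  obtain ⟨-, h⟩ := h
  rcases w with ⟨i, k⟩ | ⟨j', o'⟩
  · rcases h with h | h
    · exact h.elim
    · rcases h with ⟨-, h, hm⟩ | ⟨-, h, hm⟩ <;> (rw [Option.some_inj] at h; rw [← h] at hm; exact hm)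
  · rcases h with h | h
    · exact h.2.2.1 l rfl
    · rw [h.1] at *; exact h.2.2.2 l rfl

lemma adj_clique {j : Fin m} {o o' : Option (Fin n × Bool)} (hne : o ≠ o')
    (h1 : ∀ l, o = some l → l ∈ c j) (h2 : ∀ l, o' = some l → l ∈ c j) :
    (satGraph c).Adj (Sum.inr (j, o)) (Sum.inr (j, o')) := by
  rw [adj_iff]
  exact ⟨by simp [hne], Or.inl ⟨rfl, hne, h1, h2⟩⟩

end SatAux
open SimpleGraph in
lemma IsInducedMatching.adj_of_mem {V : Type*} {G : SimpleGraph V} {M : G.Subgraph}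
    (h : IsInducedMatching G M) {v w : V} (hv : v ∈ M.verts) (hw : w ∈ M.verts)
    (hadj : G.Adj v w) : M.Adj v w := by
  obtain ⟨w0, hw0, huniq⟩ := h.1 hv
  obtain ⟨z, hz, hzuniq⟩ := h.2 ⟨v, hv⟩
  have hw0v : w0 ∈ M.verts := M.edge_vert (M.adj_symm hw0)
  have h1 : z = ⟨w0, hw0v⟩ := by
    exact (hzuniq ⟨w0, hw0v⟩ (M.adj_sub hw0)).symm
  have h2 : z = ⟨w, hw⟩ := by
    exact (hzuniq ⟨w, hw⟩ hadj).symm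
  have : w = w0 := by rw [h1] at h2; exact (Subtype.mk_eq_mk.mp h2.symm)
  rw [this]; exact hw0

namespace SatAux
open SimpleGraph

variable {n m : ℕ} {c : Fin m → Finset (Fin n × Bool)} {M : (satGraph c).Subgraph}

lemma cond_of_mem (hM : M.IsMatching) {j : Fin m} {o : Option (Fin n × Bool)}
    (hv : Sum.inr (j, o) ∈ M.verts) : ∀ l, o = some l → l ∈ c j := by
  rintro l rfl
  obtain ⟨w, hw, -⟩ := hM hv
  exact mem_of_adj_some (M.adj_sub hw)

lemma adj_of_blk_eq (hM : IsInducedMatching (satGraph c) M) {a x : SatV n m}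
    (ha : a ∈ M.verts) (hx : x ∈ M.verts) (hne : a ≠ x) (hb : blk a = blk x) :
    (satGraph c).Adj a x := by
  rcases a with ⟨i, k⟩ | ⟨j, o⟩ <;> rcases x with ⟨i', k'⟩ | ⟨j', o'⟩ <;>
    simp only [blk, Sum.inl.injEq, Sum.inr.injEq, reduceCtorEq] at hb
  · obtain rfl : i = i' := hb
    exact adj_triangle (fun h => hne (by rw [h]))
  · obtain rfl : j = j' := hb
    exact adj_clique (fun h => hne (by rw [h])) (cond_of_mem hM.1 ha) (cond_of_mem hM.1 hx)

lemma eq_of_blk_eq (hM : IsInducedMatching (satGraph c) M) {a b x y : SatV n m}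
    (hab : M.Adj a b) (hxy : M.Adj x y) (hb : blk a = blk x) :
    s(a, b) = s(x, y) := by
  by_cases hax : a = x
  · subst hax
    obtain ⟨w0, -, huniq⟩ := hM.1 (M.edge_vert hab)
    rw [huniq b hab, huniq y hxy]
  · have hadj := adj_of_blk_eq hM (M.edge_vert hab) (M.edge_vert hxy) hax hb
    have h1 : M.Adj a x := hM.adj_of_mem (M.edge_vert hab) (M.edge_vert hxy) hadj
    obtain ⟨w0, -, huniq⟩ := hM.1 (M.edge_vert hab)
    have hbx : b = x := by rw [huniq b hab, huniq x h1]
    obtain ⟨w1, -, huniq'⟩ := hM.1 (M.edge_vert hxy)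
    have hya : y = a := by rw [huniq' y hxy, huniq' a (M.adj_symm h1)]
    rw [hbx, hya, Sym2.eq_swap]

end SatAux
namespace SatAux
open SimpleGraph

variable {n m : ℕ} {c : Fin m → Finset (Fin n × Bool)} {M : (satGraph c).Subgraph}

lemma counting (hM : IsInducedMatching (satGraph c) M) (hcard : M.edgeSet.ncard = n + m) :
    (∀ a b, M.Adj a b → blk a = blk b) ∧
      ∀ bk : Fin n ⊕ Fin m, ∃ a b, M.Adj a b ∧ blk a = bk ∧ blk b = bk := by
  classical
  set E : Finset (Sym2 (SatV n m)) := (M.edgeSet.toFinite).toFinset with hE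
  have hmemE : ∀ e, e ∈ E ↔ e ∈ M.edgeSet := fun e => Set.Finite.mem_toFinset _
  set F : Sym2 (SatV n m) → Finset (Fin n ⊕ Fin m) :=
    Sym2.lift ⟨fun a b => {blk a, blk b}, fun a b => Finset.pair_comm _ _⟩ with hF
  have hFmk : ∀ a b : SatV n m, F s(a, b) = {blk a, blk b} := fun a b => rfl
  have hFne : ∀ e : Sym2 (SatV n m), 1 ≤ (F e).card := by
    intro e
    induction e using Sym2.ind with
    | _ a b => rw [hFmk]; exact Finset.card_pos.mpr (Finset.insert_nonempty _ _)
  have hdisj : ∀ a b x y : SatV n m, M.Adj a b → M.Adj x y → s(a, b) ≠ s(x, y) →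
      Disjoint (F s(a, b)) (F s(x, y)) := by
    intro a b x y hab hxy hne
    rw [Finset.disjoint_left]
    intro t ht1 ht2
    rw [hFmk, Finset.mem_insert, Finset.mem_singleton] at ht1 ht2
    apply hne
    rcases ht1 with rfl | h1 <;> rcases ht2 with h2 | h2
    · exact eq_of_blk_eq hM hab hxy h2
    · rw [Sym2.eq_swap (a := x)]; exact eq_of_blk_eq hM hab (M.adj_symm hxy) h2
    · rw [Sym2.eq_swap (a := a)]
      exact eq_of_blk_eq hM (M.adj_symm hab) hxy (h1.symm.trans h2)
    · rw [Sym2.eq_swap (a := a), Sym2.eq_swap (a := x)]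
      exact eq_of_blk_eq hM (M.adj_symm hab) (M.adj_symm hxy) (h1.symm.trans h2)
  have hdisjE : ∀ e1 ∈ E, ∀ e2 ∈ E, e1 ≠ e2 → Disjoint (F e1) (F e2) := by
    intro e1 he1 e2 he2 hne
    revert he1 he2 hne
    induction e1 using Sym2.ind with
    | _ a b =>
      induction e2 using Sym2.ind with
      | _ x y =>
        intro he1 he2 hne
        exact hdisj a b x y ((hmemE _).mp he1) ((hmemE _).mp he2) hne
  have hcardE : E.card = n + m := by
    rw [← hcard, Set.ncard_eq_toFinset_card _ M.edgeSet.toFinite]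
  have hsum : ∑ e ∈ E, (F e).card = (E.biUnion F).card := (Finset.card_biUnion hdisjE).symm
  have hle1 : E.card ≤ ∑ e ∈ E, (F e).card := by
    calc E.card = ∑ _e ∈ E, 1 := by simp
    _ ≤ _ := Finset.sum_le_sum (fun e _ => hFne e)
  have hle2 : (E.biUnion F).card ≤ n + m := by
    have := Finset.card_le_univ (E.biUnion F)
    simpa using this
  have hkey : ∑ e ∈ E, (F e).card = n + m := by
    refine le_antisymm (hsum ▸ hle2) ?_
    rw [← hcardE]; exact hle1
  have hone : ∀ e ∈ E, (F e).card = 1 := by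
    by_contra hcon
    push_neg at hcon
    obtain ⟨e0, he0, hne0⟩ := hcon
    have h2 : 1 < (F e0).card := lt_of_le_of_ne (hFne e0) (Ne.symm hne0)
    have hlt : ∑ _e ∈ E, 1 < ∑ e ∈ E, (F e).card :=
      Finset.sum_lt_sum (fun i _ => hFne i) ⟨e0, he0, h2⟩
    rw [hkey] at hlt
    simp only [Finset.sum_const, smul_eq_mul, mul_one] at hlt
    rw [hcardE] at hlt
    exact lt_irrefl _ hlt
  have hintra : ∀ a b, M.Adj a b → blk a = blk b := by
    intro a b hab
    have he : s(a, b) ∈ E := (hmemE _).mpr hab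
    have h1 := hone _ he
    rw [hFmk] at h1
    by_contra hne
    rw [Finset.card_insert_of_notMem (by simpa using hne), Finset.card_singleton] at h1
    exact absurd h1 (by norm_num)
  refine ⟨hintra, ?_⟩
  have huniv : E.biUnion F = Finset.univ := by
    apply Finset.eq_univ_of_card
    rw [← hsum, hkey]
    simp
  intro bk
  have hbk : bk ∈ E.biUnion F := huniv ▸ Finset.mem_univ bk
  rw [Finset.mem_biUnion] at hbk
  obtain ⟨e, he, hbe⟩ := hbk
  revert he hbe
  induction e using Sym2.ind with
  | _ a b =>
    intro he hbe
    have hab : M.Adj a b := (hmemE _).mp he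
    rw [hFmk, Finset.mem_insert, Finset.mem_singleton] at hbe
    have hba := hintra a b hab
    rcases hbe with rfl | rfl
    · exact ⟨a, b, hab, rfl, hba.symm⟩
    · exact ⟨a, b, hab, hba, rfl⟩

end SatAux
namespace SatAux
open SimpleGraph

variable {n m : ℕ}

/-- The permutation of `Fin 3` swapping `0` and `2`. -/
def swap3 : Fin 3 → Fin 3
  | 0 => 2
  | 1 => 1
  | 2 => 0

lemma swap3_invol : ∀ k, swap3 (swap3 k) = k := by decide

/-- Swap `t_i` and `u_i` in the triangles of the variables selected by `S`. -/
def swp (S : Fin n → Prop) [DecidablePred S] : SatV n m → SatV n m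
  | Sum.inl (i, k) => if S i then Sum.inl (i, swap3 k) else Sum.inl (i, k)
  | Sum.inr x => Sum.inr x

variable {S : Fin n → Prop} [DecidablePred S]

lemma swp_invol : ∀ v : SatV n m, swp S (swp S v) = v := by
  rintro (⟨i, k⟩ | x)
  · by_cases h : S i <;> simp [swp, h, swap3_invol]
  · rfl

lemma swp_inr (j : Fin m) (o : Option (Fin n × Bool)) :
    swp S (Sum.inr (j, o) : SatV n m) = Sum.inr (j, o) := rfl

lemma swp_inl_one (i : Fin n) : swp S (Sum.inl (i, 1) : SatV n m) = Sum.inl (i, 1) := by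
  by_cases h : S i <;> simp [swp, h, swap3]

lemma blk_swp (v : SatV n m) : blk (swp S v) = blk v := by
  rcases v with ⟨i, k⟩ | x
  · by_cases h : S i <;> simp [swp, h, blk]
  · rfl

lemma swp_inj : Function.Injective (swp S (n := n) (m := m)) :=
  Function.Involutive.injective swp_invol

variable {c : Fin m → Finset (Fin n × Bool)} {M : (satGraph c).Subgraph}

/-- The matching obtained from `M` by relabelling vertices along `swp S`. -/
def swpSub (S : Fin n → Prop) [DecidablePred S] (M : (satGraph c).Subgraph)
    (hsub : ∀ {v w}, M.Adj (swp S v) (swp S w) → (satGraph c).Adj v w) :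
    (satGraph c).Subgraph where
  verts := swp S ⁻¹' M.verts
  Adj v w := M.Adj (swp S v) (swp S w)
  adj_sub h := hsub h
  edge_vert h := M.edge_vert h
  symm := ⟨fun _ _ h => M.adj_symm h⟩

lemma partner_unique (hM : M.IsMatching) {v w w' : SatV n m}
    (h1 : M.Adj v w) (h2 : M.Adj v w') : w = w' := by
  obtain ⟨z, -, hu⟩ := hM (M.edge_vert h1)
  rw [hu w h1, hu w' h2]

lemma swpSub_isMatching (hM : M.IsMatching)
    (hsub : ∀ {v w}, M.Adj (swp S v) (swp S w) → (satGraph c).Adj v w) :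
    (swpSub S M hsub).IsMatching := by
  intro v hv
  obtain ⟨w0, hw0, hu⟩ := hM hv
  refine ⟨swp S w0, ?_, ?_⟩
  · show M.Adj (swp S v) (swp S (swp S w0))
    rw [swp_invol]; exact hw0
  · intro y hy
    have h1 : swp S y = w0 := hu (swp S y) hy
    rw [← h1, swp_invol]

end SatAux
namespace SatAux
open SimpleGraph

variable {n m : ℕ} {c : Fin m → Finset (Fin n × Bool)} {M : (satGraph c).Subgraph}

lemma blk_eq_inl {v : SatV n m} {i : Fin n} (h : blk v = Sum.inl i) :
    ∃ k, v = Sum.inl (i, k) := by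
  rcases v with ⟨i', k⟩ | x
  · simp only [blk, Sum.inl.injEq] at h
    exact ⟨k, by rw [h]⟩
  · simp [blk] at h

lemma blk_eq_inr {v : SatV n m} {j : Fin m} (h : blk v = Sum.inr j) :
    ∃ o, v = Sum.inr (j, o) := by
  rcases v with ⟨i', k⟩ | ⟨j', o⟩
  · simp [blk] at h
  · simp only [blk, Sum.inr.injEq] at h
    exact ⟨o, by rw [h]⟩

lemma triangle_edge
    (hcover : ∀ bk : Fin n ⊕ Fin m, ∃ a b, M.Adj a b ∧ blk a = bk ∧ blk b = bk) (i : Fin n) :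
    M.Adj (Sum.inl (i, 0)) (Sum.inl (i, 1)) ∨ M.Adj (Sum.inl (i, 2)) (Sum.inl (i, 0)) ∨
      M.Adj (Sum.inl (i, 2)) (Sum.inl (i, 1)) := by
  obtain ⟨a, b, hab, hba, hbb⟩ := hcover (Sum.inl i)
  obtain ⟨k, rfl⟩ := blk_eq_inl hba
  obtain ⟨k', rfl⟩ := blk_eq_inl hbb
  have hkk' : k ≠ k' := by
    intro h
    exact ((satGraph c).ne_of_adj (M.adj_sub hab)) (by rw [h])
  fin_cases k <;> fin_cases k' <;>
    first
      | exact absurd rfl hkk'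
      | exact Or.inl hab
      | exact Or.inl (M.adj_symm hab)
      | exact Or.inr (Or.inl hab)
      | exact Or.inr (Or.inl (M.adj_symm hab))
      | exact Or.inr (Or.inr hab)
      | exact Or.inr (Or.inr (M.adj_symm hab))

lemma third_not_mem (hM : IsInducedMatching (satGraph c) M)
    (hintra : ∀ a b, M.Adj a b → blk a = blk b) {i : Fin n} {k k' : Fin 3}
    (h : M.Adj (Sum.inl (i, k)) (Sum.inl (i, k'))) {k'' : Fin 3}
    (h1 : k'' ≠ k) (h2 : k'' ≠ k') : (Sum.inl (i, k'') : SatV n m) ∉ M.verts := by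
  intro hmem
  obtain ⟨p, hp, -⟩ := hM.1 hmem
  obtain ⟨k3, rfl⟩ := blk_eq_inl ((hintra _ _ hp).symm.trans (rfl : blk (Sum.inl (i,k'') : SatV n m) = Sum.inl i))
  have hkk' : k ≠ k' := (adj_inl_inl (M.adj_sub h)).2
  have hk3 : k3 ≠ k'' := ((adj_inl_inl (M.adj_sub hp)).2).symm
  have hdec : ∀ a b d e : Fin 3, d ≠ a → d ≠ b → a ≠ b → e ≠ d → e = a ∨ e = b := by decide
  rcases hdec k k' k'' k3 h1 h2 hkk' hk3 with rfl | rfl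
  · have heq := partner_unique hM.1 (M.adj_symm hp) h
    simp only [Sum.inl.injEq, Prod.mk.injEq, true_and] at heq
    exact h2 heq
  · have heq := partner_unique hM.1 (M.adj_symm hp) (M.adj_symm h)
    simp only [Sum.inl.injEq, Prod.mk.injEq, true_and] at heq
    exact h1 heq

lemma adj_inr_inr_full {j : Fin m} {o o' : Option (Fin n × Bool)}
    (h : (satGraph c).Adj (Sum.inr (j, o)) (Sum.inr (j, o'))) :
    o ≠ o' ∧ (∀ l, o = some l → l ∈ c j) ∧ (∀ l, o' = some l → l ∈ c j) := by
  rw [adj_iff] at h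
  rcases h.2 with h' | h'
  · exact ⟨h'.2.1, h'.2.2.1, h'.2.2.2⟩
  · exact ⟨(h'.2.1).symm, h'.2.2.2, h'.2.2.1⟩

lemma clique_edge
    (hcover : ∀ bk : Fin n ⊕ Fin m, ∃ a b, M.Adj a b ∧ blk a = bk ∧ blk b = bk) (j : Fin m) :
    ∃ l ∈ c j, (Sum.inr (j, some l) : SatV n m) ∈ M.verts := by
  obtain ⟨a, b, hab, hba, hbb⟩ := hcover (Sum.inr j)
  obtain ⟨o, rfl⟩ := blk_eq_inr hba
  obtain ⟨o', rfl⟩ := blk_eq_inr hbb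
  obtain ⟨hne, hc1, hc2⟩ := adj_inr_inr_full (M.adj_sub hab)
  rcases ho : o with _ | l
  · rcases ho' : o' with _ | l'
    · rw [ho, ho'] at hne; exact absurd rfl hne
    · exact ⟨l', hc2 l' ho', by rw [← ho']; exact M.edge_vert (M.adj_symm hab)⟩
  · exact ⟨l, hc1 l ho, by rw [← ho]; exact M.edge_vert hab⟩

end SatAux
namespace SatAux
open SimpleGraph

variable {n m : ℕ} {c : Fin m → Finset (Fin n × Bool)} {M : (satGraph c).Subgraph}
variable {S : Fin n → Prop} [DecidablePred S]

lemma swp_sub (hintra : ∀ a b, M.Adj a b → blk a = blk b) :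
    ∀ {v w}, M.Adj (swp S v) (swp S w) → (satGraph c).Adj v w := by
  intro v w h
  have hb : blk v = blk w := by
    rw [← blk_swp (S := S) v, ← blk_swp (S := S) w]
    exact hintra _ _ h
  have hne : v ≠ w := by
    intro e
    exact ((satGraph c).ne_of_adj (M.adj_sub h)) (by rw [e])
  rcases v with ⟨i, k⟩ | ⟨j, o⟩ <;> rcases w with ⟨i', k'⟩ | ⟨j', o'⟩ <;>
    simp only [blk, Sum.inl.injEq, Sum.inr.injEq, reduceCtorEq] at hb
  · obtain rfl : i = i' := hb
    refine adj_triangle fun hk => hne (by rw [hk])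
  · exact M.adj_sub h

lemma swp_no_cross (hM : IsInducedMatching (satGraph c) M)
    (hintra : ∀ a b, M.Adj a b → blk a = blk b)
    (hS : ∀ i, S i → M.Adj (Sum.inl (i, 0)) (Sum.inl (i, 1)))
    {i : Fin n} {k : Fin 3} {j : Fin m} {o : Option (Fin n × Bool)}
    (hv : swp S (Sum.inl (i, k)) ∈ M.verts) (hw : (Sum.inr (j, o) : SatV n m) ∈ M.verts) :
    ¬ (satGraph c).Adj (Sum.inl (i, k)) (Sum.inr (j, o)) := by
  intro hadj
  have hfalse : (Sum.inl (i, k) : SatV n m) ∈ M.verts → False := by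
    intro hv'
    have hMadj := hM.adj_of_mem hv' hw hadj
    have := hintra _ _ hMadj
    simp [blk] at this
  rcases adj_inl_inr hadj with ⟨rfl, -, -⟩ | ⟨rfl, -, -⟩
  · rw [swp_inl_one] at hv
    exact hfalse hv
  · by_cases hSi : S i
    · have hu : swp S (Sum.inl (i, 0) : SatV n m) = Sum.inl (i, 2) := by
        simp [swp, hSi, swap3]
      rw [hu] at hv
      exact third_not_mem hM hintra (hS i hSi) (by decide) (by decide) hv
    · have hu : swp S (Sum.inl (i, 0) : SatV n m) = Sum.inl (i, 0) := by
        simp [swp, hSi]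
      rw [hu] at hv
      exact hfalse hv

lemma swp_cross (hM : IsInducedMatching (satGraph c) M)
    (hintra : ∀ a b, M.Adj a b → blk a = blk b)
    (hS : ∀ i, S i → M.Adj (Sum.inl (i, 0)) (Sum.inl (i, 1)))
    (hsub : ∀ {v w}, M.Adj (swp S v) (swp S w) → (satGraph c).Adj v w)
    {v w : SatV n m} (hv : v ∈ (swpSub S M @hsub).verts) (hw : w ∈ (swpSub S M @hsub).verts)
    (hadj : (satGraph c).Adj v w) : (swpSub S M @hsub).Adj v w := by
  have hv' : swp S v ∈ M.verts := hv
  have hw' : swp S w ∈ M.verts := hw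
  show M.Adj (swp S v) (swp S w)
  rcases v with ⟨i, k⟩ | ⟨j, o⟩ <;> rcases w with ⟨i', k'⟩ | ⟨j', o'⟩
  · obtain ⟨rfl, -⟩ := adj_inl_inl hadj
    have hne : swp S (Sum.inl (i, k) : SatV n m) ≠ swp S (Sum.inl (i, k')) :=
      fun h => (satGraph c).ne_of_adj hadj (swp_inj h)
    have hb : blk (swp S (Sum.inl (i, k) : SatV n m)) = blk (swp S (Sum.inl (i, k'))) := by
      rw [blk_swp, blk_swp]; rfl
    exact hM.adj_of_mem hv' hw' (adj_of_blk_eq hM hv' hw' hne hb)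
  · exact absurd hadj (swp_no_cross hM hintra hS hv' hw')
  · exact absurd hadj.symm (swp_no_cross hM hintra hS hw' hv')
  · exact hM.adj_of_mem hv' hw' hadj

lemma swpSub_induced (hM : IsInducedMatching (satGraph c) M)
    (hintra : ∀ a b, M.Adj a b → blk a = blk b)
    (hS : ∀ i, S i → M.Adj (Sum.inl (i, 0)) (Sum.inl (i, 1)))
    (hsub : ∀ {v w}, M.Adj (swp S v) (swp S w) → (satGraph c).Adj v w) :
    IsInducedMatching (satGraph c) (swpSub S M @hsub) := by
  refine ⟨swpSub_isMatching hM.1 @hsub, ?_⟩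
  rintro ⟨v, hv⟩
  obtain ⟨w0, hw0, hu⟩ := swpSub_isMatching hM.1 @hsub hv
  have hw0m : w0 ∈ (swpSub S M @hsub).verts := (swpSub S M @hsub).edge_vert ((swpSub S M @hsub).adj_symm hw0)
  refine ⟨⟨w0, hw0m⟩, (swpSub S M @hsub).adj_sub hw0, ?_⟩
  rintro ⟨y, hy⟩ hyadj
  have : (swpSub S M @hsub).Adj v y := swp_cross hM hintra hS @hsub hv hy hyadj
  exact Subtype.ext (hu y this)

lemma swpSub_ncard
    (hsub : ∀ {v w}, M.Adj (swp S v) (swp S w) → (satGraph c).Adj v w) :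
    (swpSub S M @hsub).edgeSet.ncard = M.edgeSet.ncard := by
  have hmap : ∀ e : Sym2 (SatV n m), Sym2.map (swp S) (Sym2.map (swp S) e) = e := by
    intro e
    induction e using Sym2.ind with
    | _ a b => rw [Sym2.map_pair_eq, Sym2.map_pair_eq, swp_invol, swp_invol]
  have hmem : ∀ e, e ∈ (swpSub S M @hsub).edgeSet ↔ Sym2.map (swp S) e ∈ M.edgeSet := by
    intro e
    induction e using Sym2.ind with
    | _ a b => rw [Sym2.map_pair_eq]; exact Iff.rfl
  have himg : Sym2.map (swp S) '' (swpSub S M @hsub).edgeSet = M.edgeSet := by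
    ext e
    constructor
    · rintro ⟨e', he', rfl⟩
      exact (hmem e').mp he'
    · intro he
      exact ⟨Sym2.map (swp S) e, (hmem _).mpr (by rw [hmap]; exact he), hmap e⟩
  rw [← himg, Set.ncard_image_of_injective _ (Function.Involutive.injective hmap)]

end SatAux

open SatAux

/-- If `ν_s(G(Γ)) = n + m`, then `Γ` is satisfiable; moreover, there is a maximum induced
matching `M` of `G(Γ)` containing, for each `i ∈ [n]`, either `u_i f_i` or `u_i t_i`, and the
truth assignment `t` with `t(x_i) = 0` if `u_i f_i ∈ M` and `t(x_i) = 1` if `u_i t_i ∈ M`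
satisfies `Γ`. -/
theorem satisfiable_of_nuS_eq {n m : ℕ} (c : Fin m → Finset (Fin n × Bool))
    (hsize : ∀ j, (c j).card = 2 ∨ (c j).card = 3)
    (hpos : ∀ i : Fin n, (Finset.univ.filter fun j => (i, true) ∈ c j).card ≤ 2)
    (hneg : ∀ i : Fin n, (Finset.univ.filter fun j => (i, false) ∈ c j).card ≤ 1)
    (hcon : ∀ j, ∀ i : Fin n, ¬((i, true) ∈ c j ∧ (i, false) ∈ c j))
    (hs : nuS (satGraph c) = n + m) :
    (∃ t : Fin n → Bool, ∀ j, ∃ l ∈ c j, t l.1 = l.2) ∧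
    ∃ M : (satGraph c).Subgraph, IsInducedMatching (satGraph c) M ∧
      M.edgeSet.ncard = nuS (satGraph c) ∧
      (∀ i : Fin n,
        M.Adj (Sum.inl (i, 2)) (Sum.inl (i, 1)) ∨ M.Adj (Sum.inl (i, 2)) (Sum.inl (i, 0))) ∧
      ∃ t : Fin n → Bool,
        (∀ i : Fin n, (t i = false ↔ M.Adj (Sum.inl (i, 2)) (Sum.inl (i, 1))) ∧
          (t i = true ↔ M.Adj (Sum.inl (i, 2)) (Sum.inl (i, 0)))) ∧
        ∀ j, ∃ l ∈ c j, t l.1 = l.2 := by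
  classical
  -- extract a maximum induced matching of size `n + m`
  have hne0 : (0 : ℕ) ∈ {k : ℕ | ∃ M : (satGraph c).Subgraph,
      IsInducedMatching (satGraph c) M ∧ M.edgeSet.ncard = k} := by
    refine ⟨⊥, ⟨?_, ?_⟩, by simp⟩
    · intro v hv
      rw [SimpleGraph.Subgraph.verts_bot] at hv
      exact absurd hv (Set.notMem_empty _)
    · rintro ⟨v, hv⟩
      rw [SimpleGraph.Subgraph.verts_bot] at hv
      exact absurd hv (Set.notMem_empty _)
  have hbdd : BddAbove {k : ℕ | ∃ M : (satGraph c).Subgraph,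
      IsInducedMatching (satGraph c) M ∧ M.edgeSet.ncard = k} := by
    refine ⟨(Set.univ : Set (Sym2 (SatV n m))).ncard, ?_⟩
    rintro k ⟨M, -, rfl⟩
    exact Set.ncard_le_ncard (Set.subset_univ _) Set.finite_univ
  have hmem : n + m ∈ {k : ℕ | ∃ M : (satGraph c).Subgraph,
      IsInducedMatching (satGraph c) M ∧ M.edgeSet.ncard = k} := by
    rw [← hs]
    exact Nat.sSup_mem ⟨0, hne0⟩ hbdd
  obtain ⟨M, hM, hMcard⟩ := hmem
  obtain ⟨hintra, hcover⟩ := counting hM hMcard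
  -- the set of variables whose triangle edge is `t_i f_i`, to be swapped
  set S : Fin n → Prop := fun i => M.Adj (Sum.inl (i, 0)) (Sum.inl (i, 1)) with hSdef
  have hS : ∀ i, S i → M.Adj (Sum.inl (i, 0)) (Sum.inl (i, 1)) := fun i h => h
  have hsub : ∀ {v w}, M.Adj (swp S v) (swp S w) → (satGraph c).Adj v w := swp_sub hintra
  set M' := swpSub S M @hsub with hM'def
  have hMind' : IsInducedMatching (satGraph c) M' := swpSub_induced hM hintra hS @hsub
  have hncard' : M'.edgeSet.ncard = n + m := by
    rw [hM'def, swpSub_ncard, hMcard]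
  -- for each variable, `M'` contains `u_i f_i` or `u_i t_i`
  have hdis : ∀ i : Fin n,
      M'.Adj (Sum.inl (i, 2)) (Sum.inl (i, 1)) ∨ M'.Adj (Sum.inl (i, 2)) (Sum.inl (i, 0)) := by
    intro i
    rcases triangle_edge hcover i with h01 | h20 | h21
    · left
      show M.Adj (swp S (Sum.inl (i, 2))) (swp S (Sum.inl (i, 1)))
      have hSi : S i := h01
      have e2 : swp S (Sum.inl (i, 2) : SatV n m) = Sum.inl (i, 0) := by
        simp [swp, hSi, swap3]
      rw [e2, swp_inl_one]
      exact h01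
    · right
      have hSi : ¬ S i := by
        intro hSi
        have heq := partner_unique hM.1 hSi (M.adj_symm h20)
        simp at heq
      show M.Adj (swp S (Sum.inl (i, 2))) (swp S (Sum.inl (i, 0)))
      have e2 : swp S (Sum.inl (i, 2) : SatV n m) = Sum.inl (i, 2) := by simp [swp, hSi]
      have e0 : swp S (Sum.inl (i, 0) : SatV n m) = Sum.inl (i, 0) := by simp [swp, hSi]
      rw [e2, e0]
      exact h20
    · left
      have hSi : ¬ S i := by
        intro hSi
        have heq := partner_unique hM.1 (M.adj_symm hSi) (M.adj_symm h21)
        simp at heq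
      show M.Adj (swp S (Sum.inl (i, 2))) (swp S (Sum.inl (i, 1)))
      have e2 : swp S (Sum.inl (i, 2) : SatV n m) = Sum.inl (i, 2) := by simp [swp, hSi]
      rw [e2, swp_inl_one]
      exact h21
  -- the truth assignment
  set t : Fin n → Bool :=
    fun i => if M'.Adj (Sum.inl (i, 2)) (Sum.inl (i, 0)) then true else false with htdef
  have hiff : ∀ i : Fin n, (t i = false ↔ M'.Adj (Sum.inl (i, 2)) (Sum.inl (i, 1))) ∧
      (t i = true ↔ M'.Adj (Sum.inl (i, 2)) (Sum.inl (i, 0))) := by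
    intro i
    by_cases h : M'.Adj (Sum.inl (i, 2)) (Sum.inl (i, 0))
    · have hnot : ¬ M'.Adj (Sum.inl (i, 2)) (Sum.inl (i, 1)) := by
        intro h'
        have heq := partner_unique hMind'.1 h h'
        simp at heq
      simp [htdef, h, hnot]
    · have h1 : M'.Adj (Sum.inl (i, 2)) (Sum.inl (i, 1)) := (hdis i).resolve_right h
      simp [htdef, h, h1]
  -- the assignment satisfies every clause
  have hsat : ∀ j, ∃ l ∈ c j, t l.1 = l.2 := by
    intro j
    obtain ⟨l, hl, hp⟩ := clique_edge hcover j
    refine ⟨l, hl, ?_⟩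
    obtain ⟨i, bb⟩ := l
    have hpM' : (Sum.inr (j, some (i, bb)) : SatV n m) ∈ M'.verts := hp
    cases bb with
    | false =>
      have hadj : (satGraph c).Adj (Sum.inl (i, 0)) (Sum.inr (j, some (i, false))) := by
        rw [adj_iff]
        exact ⟨by simp, Or.inl (Or.inr ⟨rfl, rfl, hl⟩)⟩
      have htnot : (Sum.inl (i, 0) : SatV n m) ∉ M'.verts := by
        intro hv
        have hadj' := swp_cross hM hintra hS @hsub hv hpM' hadj
        have hb := hintra _ _ hadj'
        rw [blk_swp, blk_swp] at hb
        simp [blk] at hb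
      have h2 : ¬ M'.Adj (Sum.inl (i, 2)) (Sum.inl (i, 0)) :=
        fun h => htnot (M'.edge_vert (M'.adj_symm h))
      show t i = false
      simp [htdef, h2]
    | true =>
      have hadj : (satGraph c).Adj (Sum.inl (i, 1)) (Sum.inr (j, some (i, true))) := by
        rw [adj_iff]
        exact ⟨by simp, Or.inl (Or.inl ⟨rfl, rfl, hl⟩)⟩
      have hfnot : (Sum.inl (i, 1) : SatV n m) ∉ M'.verts := by
        intro hv
        have hadj' := swp_cross hM hintra hS @hsub hv hpM' hadj
        have hb := hintra _ _ hadj'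
        rw [blk_swp, blk_swp] at hb
        simp [blk] at hb
      have h1 : M'.Adj (Sum.inl (i, 2)) (Sum.inl (i, 0)) :=
        (hdis i).resolve_left (fun h => hfnot (M'.edge_vert (M'.adj_symm h)))
      show t i = true
      simp [htdef, h1]
  exact ⟨⟨t, hsat⟩, M', hMind', by rw [hs]; exact hncard', hdis, t, hiff, hsat⟩
end

section
/- Γ is satisfiable if and only if ν_ac(G(Γ)) = ν_s(G(Γ)). -/
open SimpleGraph

section General

variable {W : Type*} {G : SimpleGraph W}

lemma triangle_not_acyclic {a b d : W} (hab : G.Adj a b) (hbd : G.Adj b d)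
    (hda : G.Adj d a) : ¬ G.IsAcyclic := by
  intro h
  refine h (Walk.cons hab (Walk.cons hbd (Walk.cons hda Walk.nil))) ?_
  have n1 : a ≠ b := hab.ne
  have n2 : b ≠ d := hbd.ne
  have n3 : d ≠ a := hda.ne
  rw [Walk.cons_isCycle_iff]
  constructor
  · rw [Walk.isPath_def]
    simp only [Walk.support_cons, Walk.support_nil, List.nodup_cons, List.mem_cons]
    simp [n1, n2, n3, n1.symm, n2.symm, n3.symm]
  · simp only [Walk.edges_cons, Walk.edges_nil, List.mem_cons, List.not_mem_nil, or_false]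
    rw [Sym2.eq_iff, Sym2.eq_iff]
    push_neg
    tauto

/-- If `f` separates adjacent vertices and each vertex has at most one neighbour with
smaller `f`-value, then `G` is acyclic. -/
lemma acyclic_of_rank (f : W → ℕ)
    (hne : ∀ a b, G.Adj a b → f a ≠ f b)
    (hsub : ∀ a b b', G.Adj a b → G.Adj a b' → f b < f a → f b' < f a → b = b') :
    G.IsAcyclic := by
  classical
  intro v₀ c hc
  -- pick a vertex of maximal rank on the support tail
  have hne' : c.support.tail ≠ [] := by
    have h3 := hc.three_le_length
    have : c.support.length = c.length + 1 := c.length_support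
    intro h
    have h' := congrArg List.length h
    rw [List.length_tail, this] at h'
    simp only [List.length_nil] at h'
    omega
  obtain ⟨u, hu, hmax⟩ := Finset.exists_max_image c.support.tail.toFinset f ⟨_, List.mem_toFinset.mpr (List.head_mem hne')⟩
  rw [List.mem_toFinset] at hu
  have hmax' : ∀ x ∈ c.support.tail, f x ≤ f u := fun x hx => hmax x (List.mem_toFinset.mpr hx)
  have humem : u ∈ c.support := List.mem_of_mem_tail hu
  set c' := c.rotate u humem with hc'def
  have hc' : c'.IsCycle := hc.rotate humem
  have hsupp : ∀ x, x ∈ c'.support.tail → x ∈ c.support.tail :=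
    fun x hx => (c.support_rotate u humem).mem_iff.mp hx
  -- decompose c' = cons h q
  obtain ⟨w, h, q, hq⟩ := Walk.not_nil_iff.mp hc'.not_nil
  have hqpath : q.IsPath ∧ s(u, w) ∉ q.edges := by
    rw [hq, Walk.cons_isCycle_iff] at hc'
    exact hc'
  -- decompose q.reverse = cons h2 q2
  have hqlen : 2 ≤ q.length := by
    have h3 := hc'.three_le_length
    rw [hq] at h3
    simpa using h3
  have hqrnil : ¬ q.reverse.Nil := by
    rw [Walk.nil_iff_length_eq]
    rw [Walk.length_reverse]
    omega
  obtain ⟨y, h2, q2, hq2⟩ := Walk.not_nil_iff.mp hqrnil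
  -- w ≠ y
  have hwy : w ≠ y := by
    rintro rfl
    have : q.reverse.IsPath := hqpath.1.reverse
    rw [hq2] at this
    have : q2.IsPath := this.of_cons
    rw [Walk.isPath_iff_eq_nil] at this
    subst this
    have := congrArg Walk.length hq2
    rw [Walk.length_reverse] at this
    simp at this
    omega
  -- memberships
  have hwmem : w ∈ c'.support.tail := by
    rw [hq]
    simp [Walk.support_cons, Walk.start_mem_support]
  have hymem : y ∈ c'.support.tail := by
    rw [hq]
    simp only [Walk.support_cons, List.tail_cons]
    have : y ∈ q.reverse.support := by rw [hq2]; simp [Walk.start_mem_support]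
    rwa [Walk.support_reverse, List.mem_reverse] at this
  have hfw : f w < f u := lt_of_le_of_ne (hmax' _ (hsupp _ hwmem)) (Ne.symm (hne u w h))
  have hfy : f y < f u := lt_of_le_of_ne (hmax' _ (hsupp _ hymem)) (Ne.symm (hne u y h2))
  exact hwy (hsub u w y h h2 hfw hfy)

lemma IsMatching.verts_ncard {V : Type*} [Fintype V] {G : SimpleGraph V} {M : G.Subgraph}
    (h : M.IsMatching) : M.verts.ncard = 2 * M.edgeSet.ncard := by
  classical
  have hfib : ∀ e : M.edgeSet,
      (Finset.univ.filter fun v : M.verts => h.toEdge v = e).card = 2 := by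
    rintro ⟨e, he⟩
    induction e with
    | _ a b =>
      have hab : M.Adj a b := he
      have ha : a ∈ M.verts := M.edge_vert hab
      have hb : b ∈ M.verts := M.edge_vert hab.symm
      have hne : a ≠ b := (M.adj_sub hab).ne
      have hset : (Finset.univ.filter fun v : M.verts => h.toEdge v = ⟨s(a, b), he⟩)
          = {⟨a, ha⟩, ⟨b, hb⟩} := by
        ext v
        simp only [Finset.mem_filter, Finset.mem_univ, true_and, Finset.mem_insert,
          Finset.mem_singleton]
        constructor
        · intro hv
          obtain ⟨w, hw, -⟩ := h v.2
          rw [show v = ⟨↑v, hw.fst_mem⟩ from rfl, h.toEdge_eq_of_adj hw] at hv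
          replace hv : s(↑v, w) = s(a, b) := congrArg Subtype.val hv
          rw [Sym2.eq_iff] at hv
          rcases hv with ⟨rfl, rfl⟩ | ⟨rfl, rfl⟩
          · exact Or.inl (Subtype.ext rfl)
          · exact Or.inr (Subtype.ext rfl)
        · rintro (rfl | rfl)
          · exact h.toEdge_eq_of_adj hab
          · rw [h.toEdge_eq_of_adj hab.symm]; exact Subtype.ext Sym2.eq_swap
      rw [hset, Finset.card_insert_of_notMem (by simp [Subtype.ext_iff, hne]),
        Finset.card_singleton]
  have hcount : Fintype.card M.verts = 2 * Fintype.card M.edgeSet := by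
    rw [← Finset.card_univ, Finset.card_eq_sum_card_fiberwise
      (f := h.toEdge) (t := Finset.univ) (fun x _ => Finset.mem_univ _)]
    rw [Finset.sum_congr rfl fun e _ => hfib e]
    simp [Finset.card_univ, Nat.mul_comm]
  rw [Set.ncard_eq_toFinset_card' M.verts, Set.toFinset_card,
    Set.ncard_eq_toFinset_card' M.edgeSet, Set.toFinset_card]
  exact hcount

end General


namespace SatProof

variable {n m : ℕ} {c : Fin m → Finset (Fin n × Bool)}

def region : SatV n m → Fin n ⊕ Fin m
  | Sum.inl x => Sum.inl x.1
  | Sum.inr x => Sum.inr x.1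

lemma satGraph_adj {a b : SatV n m} :
    (satGraph c).Adj a b ↔ a ≠ b ∧ (satRel c a b ∨ satRel c b a) := fromRel_adj _ _ _

lemma active_of_adj {j : Fin m} {l : Fin n × Bool} {x : SatV n m}
    (h : (satGraph c).Adj (Sum.inr (j, some l)) x) : l ∈ c j := by
  rw [satGraph_adj] at h
  obtain ⟨-, h | h⟩ := h
  · cases x with
    | inl y => obtain ⟨i, k⟩ := y; simp [satRel] at h
    | inr y =>
      obtain ⟨j', o⟩ := y
      exact h.2.2.1 l rfl
  · cases x with
    | inl y =>
      obtain ⟨i, k⟩ := y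
      rcases h with ⟨-, h, hm⟩ | ⟨-, h, hm⟩ <;>
        (injection h with h'; exact h' ▸ hm)
    | inr y =>
      obtain ⟨j', o⟩ := y
      obtain ⟨rfl, -, -, h4⟩ := h
      exact h4 l rfl

lemma adj_of_region_eq {a b : SatV n m} (hne : a ≠ b) (hr : region a = region b)
    (ha : ∃ x, (satGraph c).Adj a x) (hb : ∃ x, (satGraph c).Adj b x) :
    (satGraph c).Adj a b := by
  rw [satGraph_adj]
  refine ⟨hne, ?_⟩
  cases a with
  | inl p =>
    obtain ⟨i, k⟩ := p
    cases b with
    | inl q =>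
      obtain ⟨i', k'⟩ := q
      simp only [region] at hr
      injection hr with hr
      subst hr
      refine Or.inl ⟨rfl, fun hk => hne (by rw [hk])⟩
    | inr q => simp [region] at hr
  | inr p =>
    obtain ⟨j, o⟩ := p
    cases b with
    | inl q => simp [region] at hr
    | inr q =>
      obtain ⟨j', o'⟩ := q
      simp only [region] at hr
      injection hr with hr
      subst hr
      refine Or.inl ⟨rfl, fun ho => hne (by rw [ho]), ?_, ?_⟩
      · rintro l rfl
        obtain ⟨x, hx⟩ := ha
        exact active_of_adj hx
      · rintro l rfl
        obtain ⟨x, hx⟩ := hb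
        exact active_of_adj hx


section Counting

variable {M : (satGraph c).Subgraph}

/-- three distinct covered vertices never share a region -/
def NoTriple (M : (satGraph c).Subgraph) : Prop :=
  ∀ a b d : SatV n m, a ∈ M.verts → b ∈ M.verts → d ∈ M.verts →
    a ≠ b → a ≠ d → b ≠ d → region a = region b → region a = region d → False

open Classical in
lemma fiber_card_le (hnt : NoTriple M) (r : Fin n ⊕ Fin m) :
    (M.verts.toFinset.filter fun v => region v = r).card ≤ 2 := by
  by_contra hgt
  push_neg at hgt
  obtain ⟨a, ha, b, hb, d, hd, hab, had, hbd⟩ := Finset.two_lt_card.mp hgt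
  simp only [Finset.mem_filter, Set.mem_toFinset] at ha hb hd
  exact hnt a b d ha.1 hb.1 hd.1 hab had hbd (ha.2.trans hb.2.symm) (ha.2.trans hd.2.symm)

open Classical in
lemma verts_ncard_le (hnt : NoTriple M) : M.verts.ncard ≤ 2 * (n + m) := by
  rw [Set.ncard_eq_toFinset_card' M.verts]
  rw [Finset.card_eq_sum_card_fiberwise (f := region) (t := Finset.univ)
    (fun x _ => Finset.mem_univ _)]
  calc ∑ r : Fin n ⊕ Fin m, (M.verts.toFinset.filter fun v => region v = r).card
      ≤ Finset.univ.card • 2 :=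
        Finset.sum_le_card_nsmul _ _ 2 fun r _ => fiber_card_le hnt r
    _ = 2 * (n + m) := by
        simp [Finset.card_univ, Fintype.card_sum, Fintype.card_fin, Nat.mul_comm, Nat.smul_one_eq_cast]

open Classical in
lemma fiber_card_eq (hnt : NoTriple M) (hcard : M.verts.ncard = 2 * (n + m))
    (r : Fin n ⊕ Fin m) :
    (M.verts.toFinset.filter fun v => region v = r).card = 2 := by
  by_contra hne
  have hlt : (M.verts.toFinset.filter fun v => region v = r).card < 2 :=
    lt_of_le_of_ne (fiber_card_le hnt r) hne
  have hsum : M.verts.toFinset.card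
      = ∑ s : Fin n ⊕ Fin m, (M.verts.toFinset.filter fun v => region v = s).card :=
    Finset.card_eq_sum_card_fiberwise (fun x _ => Finset.mem_univ _)
  have hslt : ∑ s : Fin n ⊕ Fin m, (M.verts.toFinset.filter fun v => region v = s).card
      < ∑ _s : Fin n ⊕ Fin m, 2 := by
    refine Finset.sum_lt_sum (fun s _ => fiber_card_le hnt s) ⟨r, Finset.mem_univ r, hlt⟩
  rw [← hsum, ← Set.ncard_eq_toFinset_card' M.verts, hcard] at hslt
  simp [Fintype.card_sum] at hslt
  omega

open Classical in
lemma fiber_pair (hnt : NoTriple M) (hcard : M.verts.ncard = 2 * (n + m))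
    (r : Fin n ⊕ Fin m) :
    ∃ a b : SatV n m, a ≠ b ∧ a ∈ M.verts ∧ b ∈ M.verts ∧ region a = r ∧ region b = r ∧
      (∀ x ∈ M.verts, region x = r → x = a ∨ x = b) := by
  obtain ⟨a, b, hab, hset⟩ := Finset.card_eq_two.mp (fiber_card_eq hnt hcard r)
  have ha : a ∈ M.verts ∧ region a = r := by
    have : a ∈ M.verts.toFinset.filter fun v => region v = r := hset ▸ Finset.mem_insert_self a _
    simpa [Set.mem_toFinset] using this
  have hb : b ∈ M.verts ∧ region b = r := by
    have : b ∈ M.verts.toFinset.filter fun v => region v = r := by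
      rw [hset]; exact Finset.mem_insert_of_mem (Finset.mem_singleton_self b)
    simpa [Set.mem_toFinset] using this
  refine ⟨a, b, hab, ha.1, hb.1, ha.2, hb.2, fun x hx hr => ?_⟩
  have : x ∈ M.verts.toFinset.filter fun v => region v = r := by
    simp [Set.mem_toFinset, hx, hr]
  rw [hset] at this
  simpa using this

end Counting

section Construction

variable (t : Fin n → Bool) (w : Fin m → Fin n × Bool)

/-- the chosen triangle vertex `t_i` or `f_i` -/
def trio (i : Fin n) : SatV n m := Sum.inl (i, if t i then 0 else 1)

/-- the matching pairs -/
def pe : Fin n ⊕ Fin m → SatV n m × SatV n m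
  | Sum.inl i => (Sum.inl (i, 2), trio t i)
  | Sum.inr j => (Sum.inr (j, none), Sum.inr (j, some (w j)))

variable {t w}

lemma trio_ne_two (i : Fin n) : (trio t i : SatV n m) ≠ Sum.inl (i, 2) := by
  intro h
  unfold trio at h
  simp only [Sum.inl.injEq, Prod.mk.injEq] at h
  revert h
  cases t i <;> decide

lemma pe_adj (hw : ∀ j, w j ∈ c j) (x : Fin n ⊕ Fin m) :
    (satGraph c).Adj (pe t w x).1 (pe t w x).2 := by
  rw [satGraph, fromRel_adj]
  cases x with
  | inl i =>
    refine ⟨fun h => trio_ne_two i h.symm, Or.inl ?_⟩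
    unfold pe trio
    simp only
    refine ⟨rfl, ?_⟩
    cases t i <;> decide
  | inr j =>
    refine ⟨by simp [pe], Or.inl ?_⟩
    unfold pe
    simp only
    exact ⟨rfl, by simp, by simp, by rintro l hl; injection hl with hl; exact hl ▸ hw j⟩

lemma pe_fst_inj {x y : Fin n ⊕ Fin m} (h : (pe t w x).1 = (pe t w y).1) : x = y := by
  cases x <;> cases y <;> simp [pe] at h ⊢ <;> tauto

lemma pe_snd_inj {x y : Fin n ⊕ Fin m} (h : (pe t w x).2 = (pe t w y).2) : x = y := by
  cases x <;> cases y <;> simp [pe, trio] at h ⊢ <;> tauto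

lemma pe_fst_ne_snd (x y : Fin n ⊕ Fin m) : (pe t w x).1 ≠ (pe t w y).2 := by
  cases x <;> cases y <;> simp [pe, trio] <;> try (intro h; exact h ▸ (by cases t _ <;> decide))

/-- the constructed subgraph -/
def MK (c : Fin m → Finset (Fin n × Bool)) (t : Fin n → Bool) (w : Fin m → Fin n × Bool) :
    (satGraph c).Subgraph :=
  pairsSubgraph (satGraph c) (Set.range (pe t w))

lemma MK_adj_iff (hw : ∀ j, w j ∈ c j) {a b : SatV n m} :
    (MK c t w).Adj a b ↔ ∃ x, (a = (pe t w x).1 ∧ b = (pe t w x).2) ∨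
      (a = (pe t w x).2 ∧ b = (pe t w x).1) := by
  simp only [MK, pairsSubgraph]
  constructor
  · rintro ⟨-, (⟨x, hx⟩ | ⟨x, hx⟩)⟩
    · exact ⟨x, Or.inl ⟨(congrArg Prod.fst hx).symm, (congrArg Prod.snd hx).symm⟩⟩
    · exact ⟨x, Or.inr ⟨(congrArg Prod.snd hx).symm, (congrArg Prod.fst hx).symm⟩⟩
  · rintro ⟨x, ⟨rfl, rfl⟩ | ⟨rfl, rfl⟩⟩
    · exact ⟨pe_adj hw x, Or.inl ⟨x, rfl⟩⟩
    · exact ⟨(pe_adj hw x).symm, Or.inr ⟨x, rfl⟩⟩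

lemma MK_verts_iff (hw : ∀ j, w j ∈ c j) {v : SatV n m} :
    v ∈ (MK c t w).verts ↔ ∃ x, v = (pe t w x).1 ∨ v = (pe t w x).2 := by
  simp only [MK, pairsSubgraph]
  constructor
  · rintro ⟨a, b, ⟨-, (⟨x, hx⟩ | ⟨x, hx⟩)⟩, hv⟩
    · have h1 : a = (pe t w x).1 := (congrArg Prod.fst hx).symm
      have h2 : b = (pe t w x).2 := (congrArg Prod.snd hx).symm
      rw [h1, h2] at hv
      exact ⟨x, hv⟩
    · have h1 : b = (pe t w x).1 := (congrArg Prod.fst hx).symm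
      have h2 : a = (pe t w x).2 := (congrArg Prod.snd hx).symm
      rw [h1, h2] at hv
      exact ⟨x, hv.symm⟩
  · rintro ⟨x, rfl | rfl⟩
    · exact ⟨_, _, ⟨pe_adj hw x, Or.inl ⟨x, rfl⟩⟩, Or.inl rfl⟩
    · exact ⟨_, _, ⟨pe_adj hw x, Or.inl ⟨x, rfl⟩⟩, Or.inr rfl⟩

lemma MK_isMatching (hw : ∀ j, w j ∈ c j) : (MK c t w).IsMatching := by
  intro v hv
  rw [MK_verts_iff hw] at hv
  obtain ⟨x, hx | hx⟩ := hv
  · refine ⟨(pe t w x).2, (MK_adj_iff hw).mpr ⟨x, Or.inl ⟨hx, rfl⟩⟩, ?_⟩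
    intro y hy
    rw [MK_adj_iff hw] at hy
    obtain ⟨x', ⟨ha, hb⟩ | ⟨ha, hb⟩⟩ := hy
    · rw [hx] at ha
      rw [hb, pe_fst_inj ha]
    · exact absurd (hx ▸ ha) (pe_fst_ne_snd x x')
  · refine ⟨(pe t w x).1, (MK_adj_iff hw).mpr ⟨x, Or.inr ⟨hx, rfl⟩⟩, ?_⟩
    intro y hy
    rw [MK_adj_iff hw] at hy
    obtain ⟨x', ⟨ha, hb⟩ | ⟨ha, hb⟩⟩ := hy
    · exact absurd (hx ▸ ha).symm (pe_fst_ne_snd x' x)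
    · rw [hx] at ha
      rw [hb, pe_snd_inj ha]

lemma MK_edge_ncard (hw : ∀ j, w j ∈ c j) :
    (MK c t w).edgeSet.ncard = n + m := by
  have hedge : (MK c t w).edgeSet
      = (fun x => s((pe t w x).1, (pe t w x).2)) '' Set.univ := by
    ext e
    induction e with
    | _ a b =>
      simp only [Subgraph.mem_edgeSet, Set.image_univ, Set.mem_range]
      rw [MK_adj_iff hw]
      constructor
      · rintro ⟨x, ⟨rfl, rfl⟩ | ⟨rfl, rfl⟩⟩
        · exact ⟨x, rfl⟩
        · exact ⟨x, Sym2.eq_swap⟩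
      · rintro ⟨x, hx⟩
        rw [Sym2.eq_iff] at hx
        rcases hx with ⟨rfl, rfl⟩ | ⟨rfl, rfl⟩
        · exact ⟨x, Or.inl ⟨rfl, rfl⟩⟩
        · exact ⟨x, Or.inr ⟨rfl, rfl⟩⟩
  rw [hedge, Set.ncard_image_of_injective _ ?_, Set.ncard_univ]
  · simp [Nat.card_eq_fintype_card, Fintype.card_sum]
  · intro x y hxy
    simp only [Sym2.eq_iff] at hxy
    rcases hxy with ⟨h1, h2⟩ | ⟨h1, h2⟩
    · exact pe_fst_inj h1
    · exact absurd h1 (pe_fst_ne_snd x y)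

end Construction

section Classify
variable {t : Fin n → Bool} {w : Fin m → Fin n × Bool}

/-- rank function used for acyclicity -/
def frank : SatV n m → ℕ
  | Sum.inl (_, k) => if k = 2 then 0 else 1
  | Sum.inr (_, none) => 3
  | Sum.inr (_, some _) => 2

@[simp] lemma frank_U (i : Fin n) : frank (Sum.inl (i, 2) : SatV n m) = 0 := by
  simp [frank]

@[simp] lemma frank_trio (i : Fin n) : frank (trio t i : SatV n m) = 1 := by
  unfold trio frank
  cases t i <;> simp <;> decide

@[simp] lemma frank_N (j : Fin m) : frank (Sum.inr (j, none) : SatV n m) = 3 := rfl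

@[simp] lemma frank_W (j : Fin m) (l : Fin n × Bool) :
    frank (Sum.inr (j, some l) : SatV n m) = 2 := rfl

/-- classification of edges of `G(Γ)` between covered vertices of `MK` -/
lemma adj_classify (hw : ∀ j, w j ∈ c j) {a b : SatV n m}
    (ha : a ∈ (MK c t w).verts) (hb : b ∈ (MK c t w).verts)
    (hadj : (satGraph c).Adj a b) :
    (∃ x, (a = (pe t w x).1 ∧ b = (pe t w x).2) ∨ (a = (pe t w x).2 ∧ b = (pe t w x).1)) ∨
    (∃ i j, w j = (i, !t i) ∧
      ((a = trio t i ∧ b = Sum.inr (j, some (w j))) ∨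
       (b = trio t i ∧ a = Sum.inr (j, some (w j))))) := by
  rw [MK_verts_iff hw] at ha hb
  obtain ⟨x, hx⟩ := ha
  obtain ⟨y, hy⟩ := hb
  have hne := hadj.ne
  rw [satGraph_adj] at hadj
  obtain ⟨-, hrel⟩ := hadj
  -- helper to decide the shapes
  rcases x with i | j <;> rcases y with i' | j' <;>
    rcases hx with hx | hx <;> rcases hy with hy | hy <;>
      simp only [pe] at hx hy <;> subst hx <;> subst hy
  -- now 16 cases
  case inl.inl.inl.inl => -- U i vs U i'
    exfalso
    rcases hrel with h | h <;>
      · obtain ⟨h1, h2⟩ := h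
        exact h2 rfl
  case inl.inl.inl.inr => -- U i vs trio i'
    have hii : i = i' := by
      unfold trio at hrel
      rcases hrel with ⟨h1, -⟩ | ⟨h1, -⟩
      · exact h1
      · exact h1.symm
    subst hii
    exact Or.inl ⟨Sum.inl i, Or.inl ⟨rfl, rfl⟩⟩
  case inl.inl.inr.inl => -- trio i vs U i'
    have hii : i = i' := by
      unfold trio at hrel
      rcases hrel with ⟨h1, -⟩ | ⟨h1, -⟩
      · exact h1
      · exact h1.symm
    subst hii
    exact Or.inl ⟨Sum.inl i, Or.inr ⟨rfl, rfl⟩⟩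
  case inl.inl.inr.inr => -- trio i vs trio i'
    exfalso
    unfold trio at hrel hne
    rcases hrel with ⟨h1, h2⟩ | ⟨h1, h2⟩
    · subst h1; exact hne rfl
    · subst h1; exact hne rfl
  case inl.inr.inl.inl => -- U i vs N j'
    exfalso
    rcases hrel with h | h
    · rcases h with ⟨h1, h2, -⟩ | ⟨h1, h2, -⟩ <;> exact Option.some_ne_none _ h2.symm
    · exact h
  case inl.inr.inl.inr => -- U i vs W j'
    exfalso
    rcases hrel with h | h
    · rcases h with ⟨h1, -, -⟩ | ⟨h1, -, -⟩ <;> revert h1 <;> decide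
    · exact h
  case inl.inr.inr.inl => -- trio i vs N j'
    exfalso
    unfold trio at hrel
    rcases hrel with h | h
    · rcases h with ⟨-, h2, -⟩ | ⟨-, h2, -⟩ <;> exact Option.some_ne_none _ h2.symm
    · exact h
  case inl.inr.inr.inr => -- trio i vs W j' : cross edge
    refine Or.inr ⟨i, j', ?_, Or.inl ⟨rfl, rfl⟩⟩
    unfold trio at hrel
    rcases hrel with h | h
    · rcases h with ⟨h1, h2, -⟩ | ⟨h1, h2, -⟩
      · injection h2 with h2
        cases ht : t i
        · rw [h2]; simp
        · exfalso; rw [ht] at h1; exact absurd h1 (by decide)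
      · injection h2 with h2
        cases ht : t i
        · exfalso; rw [ht] at h1; exact absurd h1 (by decide)
        · rw [h2]; simp
    · exact absurd h id
  case inr.inl.inl.inl => -- N j vs U i'
    exfalso
    rcases hrel with h | h
    · exact h
    · rcases h with ⟨h1, h2, -⟩ | ⟨h1, h2, -⟩ <;> exact Option.some_ne_none _ h2.symm
  case inr.inl.inl.inr => -- N j vs trio i'
    exfalso
    unfold trio at hrel
    rcases hrel with h | h
    · exact h
    · rcases h with ⟨-, h2, -⟩ | ⟨-, h2, -⟩ <;> exact Option.some_ne_none _ h2.symm
  case inr.inl.inr.inl => -- W j vs U i'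
    exfalso
    rcases hrel with h | h
    · exact h
    · rcases h with ⟨h1, -, -⟩ | ⟨h1, -, -⟩ <;> revert h1 <;> decide
  case inr.inl.inr.inr => -- W j vs trio i' : cross edge
    refine Or.inr ⟨i', j, ?_, Or.inr ⟨rfl, rfl⟩⟩
    unfold trio at hrel
    rcases hrel with h | h
    · exact absurd h id
    · rcases h with ⟨h1, h2, -⟩ | ⟨h1, h2, -⟩
      · injection h2 with h2
        cases ht : t i'
        · rw [h2]; simp
        · exfalso; rw [ht] at h1; exact absurd h1 (by decide)
      · injection h2 with h2
        cases ht : t i'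
        · exfalso; rw [ht] at h1; exact absurd h1 (by decide)
        · rw [h2]; simp
  case inr.inr.inl.inl => -- N j vs N j'
    exfalso
    rcases hrel with ⟨h1, h2, -⟩ | ⟨h1, h2, -⟩ <;> exact h2 rfl
  case inr.inr.inl.inr => -- N j vs W j'
    have h1 : j = j' := by
      rcases hrel with ⟨h1, -⟩ | ⟨h1, -⟩
      exacts [h1, h1.symm]
    subst h1
    exact Or.inl ⟨Sum.inr j, Or.inl ⟨rfl, rfl⟩⟩
  case inr.inr.inr.inl => -- W j vs N j'
    have h1 : j = j' := by
      rcases hrel with ⟨h1, -⟩ | ⟨h1, -⟩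
      exacts [h1, h1.symm]
    subst h1
    exact Or.inl ⟨Sum.inr j, Or.inr ⟨rfl, rfl⟩⟩
  case inr.inr.inr.inr => -- W j vs W j'
    exfalso
    rcases hrel with ⟨h1, h2, -⟩ | ⟨h1, h2, -⟩
    · subst h1; exact hne rfl
    · subst h1; exact hne rfl

end Classify

section AcyclicInduced
variable {t : Fin n → Bool} {w : Fin m → Fin n × Bool}

/-- the unique lower neighbour -/
def low (t : Fin n → Bool) (w : Fin m → Fin n × Bool) : SatV n m → SatV n m
  | Sum.inl (i, _) => Sum.inl (i, 2)
  | Sum.inr (j, none) => Sum.inr (j, some (w j))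
  | Sum.inr (_, some l) => trio t l.1

lemma eq_low (hw : ∀ j, w j ∈ c j) {a b : SatV n m}
    (ha : a ∈ (MK c t w).verts) (hb : b ∈ (MK c t w).verts)
    (hadj : (satGraph c).Adj a b) (hf : frank b < frank a) : b = low t w a := by
  rcases adj_classify hw ha hb hadj with ⟨x, ⟨rfl, rfl⟩ | ⟨rfl, rfl⟩⟩ |
    ⟨i, j, hcr, ⟨rfl, rfl⟩ | ⟨rfl, rfl⟩⟩
  · rcases x with i | j
    · exfalso
      simp only [pe, frank_U, frank_trio] at hf
      omega
    · rfl
  · rcases x with i | j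
    · simp only [pe, trio, low]
    · exfalso
      simp only [pe, frank_N, frank_W] at hf
      omega
  · exfalso
    simp only [frank_trio, frank_W] at hf
    omega
  · have : (w j).1 = i := by rw [hcr]
    simp only [low, this]

lemma MK_isAcyclic (hw : ∀ j, w j ∈ c j) :
    ((satGraph c).induce (MK c t w).verts).IsAcyclic := by
  refine acyclic_of_rank (G := (satGraph c).induce (MK c t w).verts)
    (fun v => frank (v : SatV n m)) ?_ ?_
  · rintro ⟨a, ha⟩ ⟨b, hb⟩ hadj
    have hG : (satGraph c).Adj a b := hadj
    rcases adj_classify hw ha hb hG with ⟨x, ⟨rfl, rfl⟩ | ⟨rfl, rfl⟩⟩ |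
      ⟨i, j, hcr, ⟨rfl, rfl⟩ | ⟨rfl, rfl⟩⟩ <;>
      first
        | (rcases x with i | j <;> simp [pe])
        | simp
  · rintro ⟨a, ha⟩ ⟨b, hb⟩ ⟨b', hb'⟩ hab hab' hfb hfb'
    have hG : (satGraph c).Adj a b := hab
    have hG' : (satGraph c).Adj a b' := hab'
    exact Subtype.ext ((eq_low hw ha hb hG hfb).trans (eq_low hw ha hb' hG' hfb').symm)

lemma MK_adj_of_adj (hw : ∀ j, w j ∈ c j) (hsat : ∀ j, t (w j).1 = (w j).2)
    {a b : SatV n m} (ha : a ∈ (MK c t w).verts) (hb : b ∈ (MK c t w).verts)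
    (hadj : (satGraph c).Adj a b) : (MK c t w).Adj a b := by
  rcases adj_classify hw ha hb hadj with ⟨x, h⟩ | ⟨i, j, hcr, -⟩
  · exact (MK_adj_iff hw).mpr ⟨x, h⟩
  · exfalso
    have := hsat j
    rw [hcr] at this
    simp at this

lemma MK_isInduced (hw : ∀ j, w j ∈ c j) (hsat : ∀ j, t (w j).1 = (w j).2) :
    IsInducedMatching (satGraph c) (MK c t w) := by
  refine ⟨MK_isMatching hw, ?_⟩
  rintro ⟨v, hv⟩
  obtain ⟨p, hp, hup⟩ := MK_isMatching hw hv
  refine ⟨⟨p, (MK c t w).edge_vert hp.symm⟩, (MK c t w).adj_sub hp, ?_⟩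
  rintro ⟨y, hy⟩ hadj
  have hG : (satGraph c).Adj v y := hadj
  exact Subtype.ext (hup y (MK_adj_of_adj hw hsat hv hy hG))

end AcyclicInduced




section Extract

variable {M : (satGraph c).Subgraph}

lemma noTriple_of_acyclic (hm : M.IsMatching)
    (hac : ((satGraph c).induce M.verts).IsAcyclic) : NoTriple M := by
  intro a b d ha hb hd hab had hbd hrab hrad
  have hEx : ∀ x, x ∈ M.verts → ∃ y, (satGraph c).Adj x y := by
    intro x hx
    obtain ⟨y, hy, -⟩ := hm hx
    exact ⟨y, M.adj_sub hy⟩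
  have h1 : (satGraph c).Adj a b := adj_of_region_eq hab hrab (hEx a ha) (hEx b hb)
  have h2 : (satGraph c).Adj b d :=
    adj_of_region_eq hbd (hrab.symm.trans hrad) (hEx b hb) (hEx d hd)
  have h3 : (satGraph c).Adj d a :=
    (adj_of_region_eq had hrad (hEx a ha) (hEx d hd)).symm
  exact triangle_not_acyclic (G := (satGraph c).induce M.verts)
    (a := ⟨a, ha⟩) (b := ⟨b, hb⟩) (d := ⟨d, hd⟩) h1 h2 h3 hac

lemma uniq_nbr (hM : IsInducedMatching (satGraph c) M) {a y z : SatV n m}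
    (ha : a ∈ M.verts) (hy : y ∈ M.verts) (hz : z ∈ M.verts)
    (h1 : (satGraph c).Adj a y) (h2 : (satGraph c).Adj a z) : y = z := by
  obtain ⟨p, -, hup⟩ := hM.2 ⟨a, ha⟩
  have e1 := hup ⟨y, hy⟩ h1
  have e2 := hup ⟨z, hz⟩ h2
  have := e1.trans e2.symm
  exact congrArg Subtype.val this

lemma noTriple_of_induced (hM : IsInducedMatching (satGraph c) M) : NoTriple M := by
  intro a b d ha hb hd hab had hbd hrab hrad
  have hEx : ∀ x, x ∈ M.verts → ∃ y, (satGraph c).Adj x y := by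
    intro x hx
    obtain ⟨y, hy, -⟩ := hM.1 hx
    exact ⟨y, M.adj_sub hy⟩
  have h1 : (satGraph c).Adj a b := adj_of_region_eq hab hrab (hEx a ha) (hEx b hb)
  have h2 : (satGraph c).Adj a d := adj_of_region_eq had hrad (hEx a ha) (hEx d hd)
  exact hbd (uniq_nbr hM ha hb hd h1 h2)

lemma region_inr {x : SatV n m} {j : Fin m} (h : region x = Sum.inr j) :
    ∃ o, x = Sum.inr (j, o) := by
  cases x with
  | inl p => simp [region] at h
  | inr p =>
    obtain ⟨j', o⟩ := p
    simp only [region, Sum.inr.injEq] at h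
    exact ⟨o, by rw [h]⟩

lemma region_inl {x : SatV n m} {i : Fin n} (h : region x = Sum.inl i) :
    ∃ k, x = Sum.inl (i, k) := by
  cases x with
  | inl p =>
    obtain ⟨i', k⟩ := p
    simp only [region, Sum.inl.injEq] at h
    exact ⟨k, by rw [h]⟩
  | inr p => simp [region] at h

lemma extract (hM : IsInducedMatching (satGraph c) M)
    (hcard : M.edgeSet.ncard = n + m) :
    ∃ t : Fin n → Bool, ∀ j, ∃ l ∈ c j, t l.1 = l.2 := by
  classical
  have hnt : NoTriple M := noTriple_of_induced hM
  have hv : M.verts.ncard = 2 * (n + m) := by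
    rw [IsMatching.verts_ncard hM.1, hcard]
  set t : Fin n → Bool :=
    fun i => if (Sum.inl (i, 1) : SatV n m) ∈ M.verts then false else true with ht
  have hEx : ∀ x, x ∈ M.verts → ∃ y, (satGraph c).Adj x y := by
    intro x hx
    obtain ⟨y, hy, -⟩ := hM.1 hx
    exact ⟨y, M.adj_sub hy⟩
  refine ⟨t, fun j => ?_⟩
  have key : ∀ (l : Fin n × Bool) (other : SatV n m),
      Sum.inr (j, some l) ∈ M.verts → other ∈ M.verts →
      Sum.inr (j, some l) ≠ other → region other = Sum.inr j →
      ∃ l' ∈ c j, t l'.1 = l'.2 := by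
    rintro ⟨i, s⟩ other hW hoth hne hro
    have hlcj : (i, s) ∈ c j := by
      obtain ⟨p, hp, -⟩ := hM.1 hW
      exact active_of_adj (M.adj_sub hp)
    have hGWoth : (satGraph c).Adj (Sum.inr (j, some (i, s))) other :=
      adj_of_region_eq hne (by rw [hro]; rfl) (hEx _ hW) (hEx _ hoth)
    set y : SatV n m := Sum.inl (i, if s then 1 else 0) with hy
    have hadjWy : (satGraph c).Adj (Sum.inr (j, some (i, s))) y := by
      rw [satGraph_adj]
      refine ⟨by simp [hy], Or.inr ?_⟩
      cases s with
      | true => exact Or.inl ⟨rfl, rfl, hlcj⟩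
      | false => exact Or.inr ⟨rfl, rfl, hlcj⟩
    have hyno : y ∉ M.verts := by
      intro hymem
      have heq : y = other := uniq_nbr hM hW hymem hoth hadjWy hGWoth
      have : region y = Sum.inr j := by rw [heq, hro]
      simp [hy, region] at this
    cases s with
    | true =>
      refine ⟨(i, true), hlcj, ?_⟩
      have : (Sum.inl (i, 1) : SatV n m) ∉ M.verts := by simpa [hy] using hyno
      simp [ht, this]
    | false =>
      obtain ⟨p, q, hpq, hp, hq, hrp, hrq, -⟩ := fiber_pair hnt hv (Sum.inl i)
      obtain ⟨kp, rfl⟩ := region_inl hrp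
      obtain ⟨kq, rfl⟩ := region_inl hrq
      have hkpq : kp ≠ kq := fun h => hpq (by rw [h])
      have hkp0 : kp ≠ 0 := by
        rintro rfl
        exact hyno (by simpa [hy] using hp)
      have hkq0 : kq ≠ 0 := by
        rintro rfl
        exact hyno (by simpa [hy] using hq)
      have hd : ∀ kp kq : Fin 3, kp ≠ kq → kp ≠ 0 → kq ≠ 0 → kp = 1 ∨ kq = 1 := by decide
      have hone : kp = 1 ∨ kq = 1 := hd kp kq hkpq hkp0 hkq0
      have hf : (Sum.inl (i, 1) : SatV n m) ∈ M.verts := by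
        rcases hone with rfl | rfl
        exacts [hp, hq]
      refine ⟨(i, false), hlcj, ?_⟩
      simp [ht, hf]
  obtain ⟨a, b, hab, ha, hb, hra, hrb, -⟩ := fiber_pair hnt hv (Sum.inr j)
  obtain ⟨oa, rfl⟩ := region_inr hra
  obtain ⟨ob, rfl⟩ := region_inr hrb
  cases oa with
  | none =>
    cases ob with
    | none => exact absurd rfl hab
    | some l => exact key l _ hb ha (fun h => hab h.symm) hra
  | some l => exact key l _ ha hb hab hrb

lemma acyclic_ncard_le (h : IsAcyclicMatching (satGraph c) M) :
    M.edgeSet.ncard ≤ n + m := by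
  have h1 := IsMatching.verts_ncard h.1
  have h2 := verts_ncard_le (noTriple_of_acyclic h.1 h.2)
  omega

lemma induced_ncard_le (h : IsInducedMatching (satGraph c) M) :
    M.edgeSet.ncard ≤ n + m := by
  have h1 := IsMatching.verts_ncard h.1
  have h2 := verts_ncard_le (noTriple_of_induced h)
  omega

end Extract

end SatProof

/-- `Γ` is satisfiable if and only if `ν_ac(G(Γ)) = ν_s(G(Γ))`. -/
theorem satisfiable_iff_nuAc_eq_nuS {n m : ℕ} (c : Fin m → Finset (Fin n × Bool))
    (hsize : ∀ j, (c j).card = 2 ∨ (c j).card = 3)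
    (hpos : ∀ i : Fin n, (Finset.univ.filter fun j => (i, true) ∈ c j).card ≤ 2)
    (hneg : ∀ i : Fin n, (Finset.univ.filter fun j => (i, false) ∈ c j).card ≤ 1)
    (hcon : ∀ j, ∀ i : Fin n, ¬((i, true) ∈ c j ∧ (i, false) ∈ c j)) :
    (∃ t : Fin n → Bool, ∀ j, ∃ l ∈ c j, t l.1 = l.2) ↔
      nuAc (satGraph c) = nuS (satGraph c) := by
  classical
  open SatProof in
  have hne : ∀ j, ∃ x, x ∈ c j := by
    intro j
    have : 0 < (c j).card := by rcases hsize j with h | h <;> omega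
    exact Finset.card_pos.mp this
  choose w0 hw0 using hne
  have hacBound : ∀ k ∈ {k : ℕ | ∃ M : (satGraph c).Subgraph,
      IsAcyclicMatching (satGraph c) M ∧ M.edgeSet.ncard = k}, k ≤ n + m := by
    rintro k ⟨M, hM, rfl⟩
    exact acyclic_ncard_le hM
  have hsBound : ∀ k ∈ {k : ℕ | ∃ M : (satGraph c).Subgraph,
      IsInducedMatching (satGraph c) M ∧ M.edgeSet.ncard = k}, k ≤ n + m := by
    rintro k ⟨M, hM, rfl⟩
    exact induced_ncard_le hM
  have hacMem : (n + m) ∈ {k : ℕ | ∃ M : (satGraph c).Subgraph,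
      IsAcyclicMatching (satGraph c) M ∧ M.edgeSet.ncard = k} :=
    ⟨MK c (fun _ => true) w0, ⟨MK_isMatching hw0, MK_isAcyclic hw0⟩, MK_edge_ncard hw0⟩
  have hAc : nuAc (satGraph c) = n + m := by
    refine le_antisymm (csSup_le ⟨_, hacMem⟩ hacBound) (le_csSup ⟨n + m, hacBound⟩ hacMem)
  constructor
  · rintro ⟨t, ht⟩
    choose w1 hw1 hw1s using ht
    have hsMem : (n + m) ∈ {k : ℕ | ∃ M : (satGraph c).Subgraph,
        IsInducedMatching (satGraph c) M ∧ M.edgeSet.ncard = k} :=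
      ⟨MK c t w1, MK_isInduced hw1 hw1s, MK_edge_ncard hw1⟩
    have hS : nuS (satGraph c) = n + m :=
      le_antisymm (csSup_le ⟨_, hsMem⟩ hsBound) (le_csSup ⟨n + m, hsBound⟩ hsMem)
    rw [hAc, hS]
  · intro h
    have h0 : (0 : ℕ) ∈ {k : ℕ | ∃ M : (satGraph c).Subgraph,
        IsInducedMatching (satGraph c) M ∧ M.edgeSet.ncard = k} := by
      refine ⟨⊥, ⟨?_, ?_⟩, by simp [Subgraph.edgeSet_bot]⟩
      · intro v hv
        rw [Subgraph.verts_bot] at hv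
        exact absurd hv (Set.notMem_empty v)
      · rintro ⟨v, hv⟩
        rw [Subgraph.verts_bot] at hv
        exact absurd hv (Set.notMem_empty v)
    have hS : nuS (satGraph c) = n + m := (h.symm.trans hAc)
    have hmem := Nat.sSup_mem ⟨0, h0⟩ ⟨n + m, hsBound⟩
    rw [show sSup {k : ℕ | ∃ M : (satGraph c).Subgraph,
        IsInducedMatching (satGraph c) M ∧ M.edgeSet.ncard = k} = n + m from hS] at hmem
    obtain ⟨M, hM, hc⟩ := hmem
    exact extract hM hc
end
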